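/- arXiv:0812.0195 — 4 statements merged into one kernel-verified Lean document; each statement's English description precedes it below -/
import Mathlib

section
/- Let A = (v_1, …, v_q) ⊂ ℤ^n be a homogeneous normal configuration. If each circuit of the toric ideal I_A with non-square-free terms is balanced, then I_A is generated by a finite set of circuits of I_A each having a square-free term. -/
open MvPolynomial

/-- The binomial `T^a - T^b` in `K[T_1,…,T_q]`. -/
noncomputable def binom (K : Type*) [Field K] {q : ℕ} (a b : Fin q → ℕ) :
    MvPolynomial (Fin q) K :=
  monomial (Finsupp.equivFunOnFinite.symm a) 1 -
    monomial (Finsupp.equivFunOnFinite.symm b) 1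

/-- The toric ideal of the configuration `v`. -/
noncomputable def toricIdeal (K : Type*) [Field K] {n q : ℕ} (v : Fin q → Fin n → ℤ) :
    Ideal (MvPolynomial (Fin q) K) :=
  Ideal.span { f | ∃ a b : Fin q → ℕ,
    (∑ i, a i • v i) = (∑ i, b i • v i) ∧ f = binom K a b }

/-- `α` is a circuit of the configuration `v`. -/
def IsCircuitVec {n q : ℕ} (v : Fin q → Fin n → ℤ) (α : Fin q → ℤ) : Prop :=
  α ≠ 0 ∧ (∑ i, α i • v i) = 0 ∧
    (∀ β : Fin q → ℚ, (∑ i, β i • (fun l => (v i l : ℚ))) = 0 → β ≠ 0 →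
      Function.support β ⊆ Function.support α →
      Function.support β = Function.support α) ∧
    Finset.univ.gcd α = 1

def posExp {q : ℕ} (α : Fin q → ℤ) : Fin q → ℕ := fun i => (α i).toNat

def negExp {q : ℕ} (α : Fin q → ℤ) : Fin q → ℕ := fun i => (-(α i)).toNat

/-- The binomial `T^a - T^b` has a square-free term. -/
def SqFreePair {q : ℕ} (a b : Fin q → ℕ) : Prop :=
  (∀ i, a i ≤ 1) ∨ (∀ i, b i ≤ 1)

/-- `f` is a circuit of the toric ideal of `v`. -/
def IsCircuitPoly (K : Type*) [Field K] {n q : ℕ} (v : Fin q → Fin n → ℤ)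
    (f : MvPolynomial (Fin q) K) : Prop :=
  ∃ α : Fin q → ℤ, IsCircuitVec v α ∧ f = binom K (posExp α) (negExp α)

/-- `f` is a circuit of the toric ideal of `v` having a square-free term. -/
def IsSqFreeCircuitPoly (K : Type*) [Field K] {n q : ℕ} (v : Fin q → Fin n → ℤ)
    (f : MvPolynomial (Fin q) K) : Prop :=
  ∃ α : Fin q → ℤ, IsCircuitVec v α ∧ f = binom K (posExp α) (negExp α) ∧
    SqFreePair (posExp α) (negExp α)

/-- The configuration lies on an affine hyperplane off the origin. -/
def IsHomogeneousConfig {n q : ℕ} (v : Fin q → Fin n → ℤ) : Prop :=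
  ∃ w : Fin n → ℝ, ∀ i, (∑ l, w l * (v i l : ℝ)) = 1

/-- `ℕA = ℤA ∩ ℝ₊A`. -/
def IsNormalConfig {n q : ℕ} (v : Fin q → Fin n → ℤ) : Prop :=
  ∀ x : Fin n → ℤ,
    x ∈ AddSubmonoid.closure (Set.range v) ↔
      (x ∈ AddSubgroup.closure (Set.range v) ∧
        ∃ c : Fin q → ℝ, (∀ i, 0 ≤ c i) ∧ ∀ l, (x l : ℝ) = ∑ i, c i * (v i l : ℝ))

/-- The toric ideal is generated by a finite set of circuits. -/
def GenByCircuits (K : Type*) [Field K] {n q : ℕ} (v : Fin q → Fin n → ℤ) : Prop :=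
  ∃ S : Finset (MvPolynomial (Fin q) K),
    (∀ f ∈ S, IsCircuitPoly K v f) ∧
      Ideal.span (S : Set (MvPolynomial (Fin q) K)) = toricIdeal K v

/-- The toric ideal is generated by a finite set of circuits with a square-free term. -/
def GenBySqFreeCircuits (K : Type*) [Field K] {n q : ℕ} (v : Fin q → Fin n → ℤ) : Prop :=
  ∃ S : Finset (MvPolynomial (Fin q) K),
    (∀ f ∈ S, IsSqFreeCircuitPoly K v f) ∧
      Ideal.span (S : Set (MvPolynomial (Fin q) K)) = toricIdeal K v

/-- `f` is a connector of the unbalanced binomial `T^a - T^b`, where `a` is the term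
with the smaller maximal exponent and `b` the one with the larger maximal exponent. -/
def IsConnector (K : Type*) [Field K] {n q : ℕ} (v : Fin q → Fin n → ℤ)
    (a b : Fin q → ℕ) (f : MvPolynomial (Fin q) K) : Prop :=
  ∃ c d : Fin q → ℕ, f = binom K c d ∧ f ∈ toricIdeal K v ∧
    (∀ i, c i ≤ 1) ∧ (∀ i, c i ≠ 0 → a i ≠ 0) ∧ (∃ i, d i ≠ 0 ∧ b i ≠ 0)

/-- Every unbalanced circuit of the toric ideal has a connector which is a
`K[T]`-linear combination of circuits with a square-free term. -/
def ConnectorCondition (K : Type*) [Field K] {n q : ℕ} (v : Fin q → Fin n → ℤ) : Prop :=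
  ∀ α : Fin q → ℤ, IsCircuitVec v α →
    Finset.univ.sup (posExp α) < Finset.univ.sup (negExp α) →
    ∃ f : MvPolynomial (Fin q) K, IsConnector K v (posExp α) (negExp α) f ∧
      f ∈ Ideal.span { g : MvPolynomial (Fin q) K | IsSqFreeCircuitPoly K v g }

/- ===== auxiliary development ===== -/


section Basic

variable (K : Type*) [Field K] {n q : ℕ}

lemma binom_trans (a b c : Fin q → ℕ) : binom K a b + binom K b c = binom K a c := by
  unfold binom; ring

lemma binom_neg (a b : Fin q → ℕ) : binom K a b = - binom K b a := by
  unfold binom; ring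

lemma equivsymm_add (a b : Fin q → ℕ) :
    Finsupp.equivFunOnFinite.symm (a + b) =
      Finsupp.equivFunOnFinite.symm a + Finsupp.equivFunOnFinite.symm b := by
  ext i; simp [Finsupp.equivFunOnFinite]; rfl

lemma monomial_mul_binom (u a b : Fin q → ℕ) :
    monomial (Finsupp.equivFunOnFinite.symm u) (1 : K) * binom K a b =
      binom K (u + a) (u + b) := by
  unfold binom
  rw [mul_sub, monomial_mul, monomial_mul, one_mul, equivsymm_add, equivsymm_add]

/-- factor out a common monomial -/
lemma binom_factor {m a b : Fin q → ℕ} (hma : ∀ i, m i ≤ a i) (hmb : ∀ i, m i ≤ b i) :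
    binom K a b = monomial (Finsupp.equivFunOnFinite.symm m) (1 : K) *
      binom K (fun i => a i - m i) (fun i => b i - m i) := by
  rw [monomial_mul_binom]
  congr 1
  · funext i; simp only [Pi.add_apply]; have := hma i; omega
  · funext i; simp only [Pi.add_apply]; have := hmb i; omega

end Basic

section Config

variable {n q : ℕ} (v : Fin q → Fin n → ℤ)

/-- homogeneity gives a degree function -/
lemma deg_eq_of_sum_eq (hhom : IsHomogeneousConfig v) {a b : Fin q → ℕ}
    (h : (∑ i, a i • v i) = (∑ i, b i • v i)) : ∑ i, a i = ∑ i, b i := by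
  obtain ⟨w, hw⟩ := hhom
  have key : ∀ c : Fin q → ℕ, (∑ l, w l * ((∑ i, c i • v i) l : ℝ)) = (∑ i, c i : ℝ) := by
    intro c
    have : ∀ l, ((∑ i, c i • v i) l : ℝ) = ∑ i, (c i : ℝ) * (v i l : ℝ) := by
      intro l
      push_cast [Finset.sum_apply]
      simp
    simp_rw [this, Finset.mul_sum]
    rw [Finset.sum_comm]
    push_cast
    congr 1; funext i
    calc ∑ l, w l * ((c i : ℝ) * (v i l : ℝ)) = (c i : ℝ) * ∑ l, w l * (v i l : ℝ) := by
          rw [Finset.mul_sum]; congr 1; funext l; ring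
      _ = (c i : ℝ) := by rw [hw i, mul_one]
  have h2 : ((∑ i, a i : ℕ) : ℝ) = ((∑ i, b i : ℕ) : ℝ) := by
    push_cast
    rw [← key a, ← key b, h]
  exact_mod_cast h2

end Config


section Closure

variable {n q : ℕ} (v : Fin q → Fin n → ℤ)

lemma mem_addSubmonoid_closure_iff (x : Fin n → ℤ) :
    x ∈ AddSubmonoid.closure (Set.range v) ↔ ∃ e : Fin q → ℕ, x = ∑ i, e i • v i := by
  constructor
  · intro hx
    induction hx using AddSubmonoid.closure_induction with
    | mem y hy =>
      obtain ⟨i, rfl⟩ := hy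
      exact ⟨fun j => if j = i then 1 else 0, by simp [ite_smul]⟩
    | zero => exact ⟨0, by simp⟩
    | add y z hy hz ihy ihz =>
      obtain ⟨e, rfl⟩ := ihy
      obtain ⟨f, rfl⟩ := ihz
      refine ⟨e + f, ?_⟩
      rw [← Finset.sum_add_distrib]
      congr 1; funext i
      simp [add_smul]
  · rintro ⟨e, rfl⟩
    exact sum_mem fun i _ =>
      nsmul_mem (AddSubmonoid.subset_closure (Set.mem_range_self i)) _

lemma smulsum_mem_addSubgroup (a : Fin q → ℤ) :
    (∑ i, a i • v i) ∈ AddSubgroup.closure (Set.range v) :=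
  sum_mem fun i _ =>
    zsmul_mem (AddSubgroup.subset_closure (Set.mem_range_self i)) _

end Closure

section Noeth

variable {R : Type*} [CommRing R] [IsNoetherianRing R]

lemma exists_finset_subset_span_eq (X : Set R) :
    ∃ S : Finset R, ↑S ⊆ X ∧ Ideal.span (S : Set R) = Ideal.span X := by
  classical
  have hfg : (Ideal.span X).FG := IsNoetherian.noetherian _
  obtain ⟨G, hG⟩ := hfg
  have hmem : ∀ g : G, ∃ T : Finset R, ↑T ⊆ X ∧ (g : R) ∈ Ideal.span (T : Set R) := by
    intro g
    have : (g : R) ∈ Ideal.span X := by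
      rw [← hG]; exact Ideal.subset_span g.2
    exact Submodule.mem_span_finite_of_mem_span this
  choose T hT1 hT2 using hmem
  refine ⟨(G.attach).biUnion T, ?_, ?_⟩
  · intro x hx
    rw [Finset.mem_coe, Finset.mem_biUnion] at hx
    obtain ⟨g, -, hgx⟩ := hx
    exact hT1 g hgx
  · apply le_antisymm
    · apply Ideal.span_le.2
      intro x hx
      rw [Finset.mem_coe, Finset.mem_biUnion] at hx
      obtain ⟨g, -, hgx⟩ := hx
      exact Ideal.subset_span (hT1 g hgx)
    · rw [← hG]
      apply Ideal.span_le.2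
      intro g hg
      refine Ideal.span_mono ?_ (hT2 ⟨g, hg⟩)
      intro x hx
      rw [Finset.mem_coe, Finset.mem_biUnion]
      exact ⟨⟨g, hg⟩, Finset.mem_attach _ _, hx⟩

end Noeth


def Conf {q : ℕ} (α γ : Fin q → ℤ) : Prop :=
  ∀ i, (0 < γ i → 0 < α i) ∧ (γ i < 0 → α i < 0)

lemma Conf.trans {q : ℕ} {α β γ : Fin q → ℤ} (h1 : Conf α β) (h2 : Conf β γ) :
    Conf α γ :=
  fun i => ⟨fun h => (h1 i).1 ((h2 i).1 h), fun h => (h1 i).2 ((h2 i).2 h)⟩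

lemma Conf.neg {q : ℕ} {α γ : Fin q → ℤ} (h : Conf α γ) :
    Conf (fun i => -(α i)) (fun i => -(γ i)) := by
  intro i
  refine ⟨fun hi => ?_, fun hi => ?_⟩
  · have hi' : 0 < -(γ i) := hi
    have := (h i).2 (by omega)
    show 0 < -(α i); omega
  · have hi' : -(γ i) < 0 := hi
    have := (h i).1 (by omega)
    show -(α i) < 0; omega

lemma Conf.support_subset {q : ℕ} {α γ : Fin q → ℤ} (h : Conf α γ) :
    Function.support γ ⊆ Function.support α := by
  intro i hi
  simp only [Function.mem_support] at hi ⊢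
  rcases lt_or_gt_of_ne hi with h1 | h1
  · have := (h i).2 h1; omega
  · have := (h i).1 h1; omega

section ClearDen

variable {q : ℕ}

lemma clear_denominators (β : Fin q → ℚ) :
    ∃ (N : ℕ) (z : Fin q → ℤ), 0 < N ∧ ∀ i, (z i : ℚ) = (N : ℚ) * β i := by
  classical
  set N : ℕ := ∏ i, (β i).den with hN
  refine ⟨N, fun i => (β i).num * ((N / (β i).den : ℕ) : ℤ), ?_, ?_⟩
  · exact Finset.prod_pos fun i _ => (β i).pos
  · intro i
    have hdvd : (β i).den ∣ N := Finset.dvd_prod_of_mem _ (Finset.mem_univ i)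
    have hden : ((N / (β i).den : ℕ) : ℚ) * ((β i).den : ℚ) = (N : ℚ) := by
      rw [← Nat.cast_mul, Nat.div_mul_cancel hdvd]
    have hnum : ((β i).num : ℚ) = β i * ((β i).den : ℚ) := by
      rw [mul_comm, Rat.den_mul_eq_num]
    push_cast
    rw [hnum]
    calc β i * ((β i).den : ℚ) * ((N / (β i).den : ℕ) : ℚ)
        = β i * (((N / (β i).den : ℕ) : ℚ) * ((β i).den : ℚ)) := by ring
      _ = (N : ℚ) * β i := by rw [hden]; ring

end ClearDen

section LemmaA

variable {n q : ℕ} (v : Fin q → Fin n → ℤ)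

lemma qker_apply {β : Fin q → ℚ} (h : (∑ i, β i • (fun l => (v i l : ℚ))) = 0)
    (l : Fin n) : ∑ i, β i * (v i l : ℚ) = 0 := by
  have := congrFun h l
  simpa [Finset.sum_apply] using this

lemma qker_to_zker {β : Fin q → ℚ} (h : (∑ i, β i • (fun l => (v i l : ℚ))) = 0)
    (hβ : β ≠ 0) :
    ∃ z : Fin q → ℤ, (∑ i, z i • v i) = 0 ∧ z ≠ 0 ∧
      Function.support z = Function.support β := by
  obtain ⟨N, z, hN, hz⟩ := clear_denominators β
  have hN' : (N : ℚ) ≠ 0 := by positivity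
  refine ⟨z, ?_, ?_, ?_⟩
  · funext l
    have h1 : ((∑ i, z i • v i) l : ℚ) = ∑ i, (z i : ℚ) * (v i l : ℚ) := by
      push_cast [Finset.sum_apply]
      simp
    have h2 : ∑ i, (z i : ℚ) * (v i l : ℚ) = (N : ℚ) * ∑ i, β i * (v i l : ℚ) := by
      rw [Finset.mul_sum]
      congr 1; funext i; rw [hz i]; ring
    rw [qker_apply v h, mul_zero] at h2
    have h3 : ((∑ i, z i • v i) l : ℚ) = 0 := by rw [h1, h2]
    have h4 : ((0 : Fin n → ℤ) l : ℚ) = 0 := by simp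
    exact_mod_cast h3.trans h4.symm
  · intro hz0
    apply hβ
    funext i
    have h5 : (z i : ℚ) = 0 := by rw [hz0]; simp
    rw [hz i] at h5
    rcases mul_eq_zero.1 h5 with h6 | h6
    · exact absurd h6 hN'
    · simpa using h6
  · ext i
    simp only [Function.mem_support]
    constructor
    · intro h0 h1
      apply h0
      have h7 : (z i : ℚ) = 0 := by rw [hz i, h1, mul_zero]
      exact_mod_cast h7
    · intro h0 h1
      apply h0
      have h7 : (z i : ℚ) = (N:ℚ) * β i := hz i
      rw [h1] at h7
      simp only [Int.cast_zero] at h7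
      rcases mul_eq_zero.1 h7.symm with h6 | h6
      · exact absurd h6 hN'
      · exact h6

/-- the exchange step -/
lemma exchange {α z : Fin q → ℤ}
    (hαker : (∑ i, α i • v i) = 0) (hzker : (∑ i, z i • v i) = 0)
    (hsub : Function.support z ⊆ Function.support α)
    (hne : Function.support z ≠ Function.support α)
    (hplus : ∃ i, 0 < α i * z i) :
    ∃ α' : Fin q → ℤ, (∑ i, α' i • v i) = 0 ∧ α' ≠ 0 ∧ Conf α α' ∧
      Function.support α' ⊂ Function.support α := by
  classical
  have hzα : ∀ i, α i = 0 → z i = 0 := by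
    intro i hi
    by_contra h
    exact (hsub (Function.mem_support.2 h)) hi
  set S : Finset (Fin q) := Finset.univ.filter (fun i => 0 < α i * z i) with hS
  have hSne : S.Nonempty := by
    obtain ⟨i, hi⟩ := hplus
    exact ⟨i, by simp [hS, hi]⟩
  obtain ⟨i₀, hi₀S, hmin⟩ := Finset.exists_min_image S
    (fun i => ((α i).natAbs : ℚ) / ((z i).natAbs : ℚ)) hSne
  have hi₀ : 0 < α i₀ * z i₀ := by simpa [hS] using hi₀S
  have hα₀ : α i₀ ≠ 0 := fun h => by rw [h] at hi₀; simp at hi₀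
  have hz₀ : z i₀ ≠ 0 := fun h => by rw [h] at hi₀; simp at hi₀
  set Z0 : ℤ := |z i₀| with hZ0def
  set A0 : ℤ := |α i₀| with hA0def
  have hZ0 : 0 < Z0 := abs_pos.2 hz₀
  have hA0 : 0 < A0 := abs_pos.2 hα₀
  set α' : Fin q → ℤ := fun i => Z0 * α i - A0 * z i with hα'
  have hcross : ∀ i, 0 < α i * z i →
      A0 * |z i| ≤ |α i| * Z0 := by
    intro i hiS'
    have h1 := hmin i (by simp [hS, hiS'])
    have hzi : z i ≠ 0 := fun h => by rw [h] at hiS'; simp at hiS'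
    have hz0' : (0:ℚ) < ((z i₀).natAbs : ℚ) := by
      exact_mod_cast Nat.pos_of_ne_zero (by simpa using hz₀)
    have hzi' : (0:ℚ) < ((z i).natAbs : ℚ) := by
      exact_mod_cast Nat.pos_of_ne_zero (by simpa using hzi)
    rw [div_le_div_iff₀ hz0' hzi'] at h1
    have h2 : (((α i₀).natAbs : ℤ)) * ((z i).natAbs : ℤ) ≤ ((α i).natAbs : ℤ) * ((z i₀).natAbs : ℤ) := by
      exact_mod_cast h1
    rw [Int.natCast_natAbs, Int.natCast_natAbs, Int.natCast_natAbs, Int.natCast_natAbs] at h2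
    rw [hA0def, hZ0def]
    linarith [h2]
  -- key sign facts
  have hkey : ∀ i, (0 < α i → 0 ≤ α' i) ∧ (α i < 0 → α' i ≤ 0) ∧ (α i = 0 → α' i = 0) := by
    intro i
    refine ⟨?_, ?_, ?_⟩
    · intro hpos
      show (0:ℤ) ≤ Z0 * α i - A0 * z i
      rcases le_or_gt (z i) 0 with hzi | hzi
      · nlinarith
      · have hc := hcross i (by positivity)
        rw [abs_of_pos hpos, abs_of_pos hzi] at hc
        linarith
    · intro hneg
      show Z0 * α i - A0 * z i ≤ (0:ℤ)
      rcases le_or_gt 0 (z i) with hzi | hzi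
      · nlinarith
      · have hc := hcross i (by nlinarith)
        rw [abs_of_neg hneg, abs_of_neg hzi] at hc
        linarith
    · intro h0
      show Z0 * α i - A0 * z i = 0
      rw [h0, hzα i h0, mul_zero, mul_zero, sub_zero]
  have hconf : Conf α α' := by
    intro i
    obtain ⟨k1, k2, k3⟩ := hkey i
    constructor
    · intro h
      rcases lt_trichotomy (α i) 0 with hh | hh | hh
      · have := k2 hh; omega
      · have := k3 hh; omega
      · exact hh
    · intro h
      rcases lt_trichotomy (α i) 0 with hh | hh | hh
      · exact hh
      · have := k3 hh; omega
      · have := k1 hh; omega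
  have hzero₀ : α' i₀ = 0 := by
    show Z0 * α i₀ - A0 * z i₀ = 0
    rw [hZ0def, hA0def]
    rcases (mul_pos_iff.1 hi₀) with ⟨h1, h2⟩ | ⟨h1, h2⟩
    · rw [abs_of_pos h2, abs_of_pos h1]; ring
    · rw [abs_of_neg h2, abs_of_neg h1]; ring
  refine ⟨α', ?_, ?_, hconf, ?_⟩
  · -- kernel
    have : ∀ i, α' i • v i = Z0 • (α i • v i) - A0 • (z i • v i) := by
      intro i
      show (Z0 * α i - A0 * z i) • v i = _
      rw [sub_smul, smul_smul, smul_smul]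
    simp_rw [this]
    rw [Finset.sum_sub_distrib, ← Finset.smul_sum, ← Finset.smul_sum, hαker, hzker]
    simp
  · -- nonzero
    intro h0
    apply hne
    apply Set.Subset.antisymm hsub
    intro i hi
    simp only [Function.mem_support] at hi ⊢
    intro hzi
    have h9 : α' i = 0 := by rw [h0]; simp
    have h10 : Z0 * α i - A0 * z i = 0 := h9
    rw [hzi, mul_zero, sub_zero, mul_eq_zero] at h10
    rcases h10 with h | h
    · omega
    · exact hi h
  · constructor
    · exact hconf.support_subset
    · intro hcon
      have : i₀ ∈ Function.support α' := hcon (Function.mem_support.2 hα₀)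
      exact this hzero₀


/-- primitive scaling of a support-minimal kernel vector is a circuit -/
lemma primitive_circuit {α : Fin q → ℤ}
    (hker : (∑ i, α i • v i) = 0) (hα : α ≠ 0)
    (hmin : ∀ β : Fin q → ℚ, (∑ i, β i • (fun l => (v i l : ℚ))) = 0 → β ≠ 0 →
      Function.support β ⊆ Function.support α →
      Function.support β = Function.support α) :
    ∃ γ, IsCircuitVec v γ ∧ Conf α γ := by
  classical
  set g : ℤ := Finset.univ.gcd α with hg
  have hg0 : g ≠ 0 := by
    rw [hg]
    intro h
    apply hα
    funext i
    exact Finset.gcd_eq_zero_iff.1 h i (Finset.mem_univ i)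
  have hgnn : 0 ≤ g := by
    rw [hg, ← Finset.normalize_gcd, ← Int.abs_eq_normalize]
    exact abs_nonneg _
  have hgpos : 0 < g := lt_of_le_of_ne hgnn (Ne.symm hg0)
  set γ : Fin q → ℤ := fun i => α i / g with hγdef
  have hmul : ∀ i, α i = g * γ i := fun i =>
    (Int.mul_ediv_cancel' (Finset.gcd_dvd (Finset.mem_univ i))).symm
  have hsupp : Function.support γ = Function.support α := by
    ext i
    simp only [Function.mem_support]
    constructor
    · intro h h2
      apply h
      show α i / g = 0
      rw [h2]
      simp
    · intro h h2
      apply h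
      rw [hmul i, h2, mul_zero]
  have hγ0 : γ ≠ 0 := by
    intro h
    apply hα
    funext i
    rw [hmul i, h]
    simp
  have hγker : (∑ i, γ i • v i) = 0 := by
    have h1 : g • (∑ i, γ i • v i) = 0 := by
      rw [Finset.smul_sum, ← hker]
      congr 1
      funext i
      rw [smul_smul, ← hmul i]
    funext l
    have h2 := congrFun h1 l
    simp only [Pi.smul_apply, smul_eq_mul, Pi.zero_apply] at h2
    rcases mul_eq_zero.1 h2 with h | h
    · exact absurd h hg0
    · simpa using h
  have hgcdγ : Finset.univ.gcd γ = 1 := by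
    have h1 : Finset.univ.gcd α = normalize g * Finset.univ.gcd γ := by
      rw [show α = fun i => g * γ i from funext hmul]
      exact Finset.gcd_mul_left
    rw [← hg, Int.normalize_of_nonneg hgnn] at h1
    have h2 : g * 1 = g * Finset.univ.gcd γ := by rw [mul_one, ← h1]
    exact (mul_left_cancel₀ hg0 h2).symm
  refine ⟨γ, ⟨hγ0, hγker, ?_, hgcdγ⟩, ?_⟩
  · intro β hβker hβ0 hβsub
    rw [hsupp]
    exact hmin β hβker hβ0 (hβsub.trans hsupp.subset)
  · intro i
    constructor
    · intro h; rw [hmul i]; positivity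
    · intro h
      rw [hmul i]
      exact mul_neg_of_pos_of_neg hgpos h

/-- Lemma A: existence of a conformal circuit -/
lemma exists_conformal_circuit {α : Fin q → ℤ}
    (hker : (∑ i, α i • v i) = 0) (hα : α ≠ 0) :
    ∃ γ, IsCircuitVec v γ ∧ Conf α γ := by
  classical
  suffices main : ∀ c : ℕ, ∀ α : Fin q → ℤ,
      (Finset.univ.filter (fun i => α i ≠ 0)).card ≤ c →
      (∑ i, α i • v i) = 0 → α ≠ 0 → ∃ γ, IsCircuitVec v γ ∧ Conf α γ by
    exact main _ α le_rfl hker hα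
  intro c
  induction c with
  | zero =>
    intro α hcard hker hα
    exfalso
    apply hα
    funext i
    simp only [Pi.zero_apply]
    by_contra h
    have : i ∈ Finset.univ.filter (fun i => α i ≠ 0) := by simp [h]
    have := Finset.card_pos.2 ⟨i, this⟩
    omega
  | succ c ih =>
    intro α hcard hker hα
    by_cases hmin : ∀ β : Fin q → ℚ, (∑ i, β i • (fun l => (v i l : ℚ))) = 0 → β ≠ 0 →
        Function.support β ⊆ Function.support α →
        Function.support β = Function.support α
    · exact primitive_circuit v hker hα hmin
    · push_neg at hmin
      obtain ⟨β, hβker, hβ0, hβsub, hβne⟩ := hmin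
      obtain ⟨z, hzker, hz0, hzsupp⟩ := qker_to_zker v hβker hβ0
      have hsub' : Function.support z ⊆ Function.support α := hzsupp.symm ▸ hβsub
      have hne' : Function.support z ≠ Function.support α := hzsupp.symm ▸ hβne
      -- get sign-correct version of z
      obtain ⟨i₁, hi₁⟩ : ∃ i, z i ≠ 0 := by
        by_contra h
        push_neg at h
        exact hz0 (funext h)
      have hαi₁ : α i₁ ≠ 0 := by
        have := hsub' (Function.mem_support.2 hi₁)
        simpa using this
      have hstep : ∀ z' : Fin q → ℤ, (∑ i, z' i • v i) = 0 →
          Function.support z' ⊆ Function.support α →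
          Function.support z' ≠ Function.support α →
          (∃ i, 0 < α i * z' i) → ∃ γ, IsCircuitVec v γ ∧ Conf α γ := by
        intro z' hker' hsub'' hne'' hplus
        obtain ⟨α', hα'ker, hα'0, hα'conf, hα'ssub⟩ :=
          exchange v hker hker' hsub'' hne'' hplus
        have hcard' : (Finset.univ.filter (fun i => α' i ≠ 0)).card ≤ c := by
          have hFsub : Finset.univ.filter (fun i => α' i ≠ 0) ⊆
              Finset.univ.filter (fun i => α i ≠ 0) := by
            intro i hi
            simp only [Finset.mem_filter, Finset.mem_univ, true_and] at hi ⊢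
            exact hα'ssub.1 (Function.mem_support.2 hi)
          obtain ⟨x, hx1, hx2⟩ := Set.exists_of_ssubset hα'ssub
          have hlt : (Finset.univ.filter (fun i => α' i ≠ 0)).card <
              (Finset.univ.filter (fun i => α i ≠ 0)).card := by
            apply Finset.card_lt_card
            rw [Finset.ssubset_iff_of_subset hFsub]
            refine ⟨x, by simpa using hx1, by simpa using hx2⟩
          omega
        obtain ⟨γ, hγ, hγconf⟩ := ih α' hcard' hα'ker hα'0
        exact ⟨γ, hγ, hα'conf.trans hγconf⟩
      rcases lt_trichotomy (α i₁ * z i₁) 0 with hsign | hsign | hsign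
      · -- use -z
        apply hstep (fun i => -(z i))
        · have h1 : ∀ i, (-(z i)) • v i = -(z i • v i) := by intro i; rw [neg_smul]
          simp_rw [h1]
          rw [Finset.sum_neg_distrib, hzker, neg_zero]
        · intro i hi
          apply hsub'
          simp only [Function.mem_support] at hi ⊢
          omega
        · intro h
          apply hne'
          rw [← h]
          ext i
          simp only [Function.mem_support]
          omega
        · exact ⟨i₁, by nlinarith⟩
      · exfalso
        rcases mul_eq_zero.1 hsign with h | h
        · exact hαi₁ h
        · exact hi₁ h
      · exact hstep z hzker hsub' hne' ⟨i₁, hsign⟩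

end LemmaA



/- ===== toric lemmas ===== -/

noncomputable def sqJ (K : Type*) [Field K] {n q : ℕ} (v : Fin q → Fin n → ℤ) :
    Ideal (MvPolynomial (Fin q) K) :=
  Ideal.span {g : MvPolynomial (Fin q) K | IsSqFreeCircuitPoly K v g}

section ToricLemmas

variable (K : Type*) [Field K] {n q : ℕ} (v : Fin q → Fin n → ℤ)

lemma posneg_split (α : Fin q → ℤ) (i : Fin q) :
    (posExp α i : ℤ) - (negExp α i : ℤ) = α i := by
  simp only [posExp, negExp]
  omega

lemma natSum_eq_intSum (c : Fin q → ℕ) :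
    (∑ i, c i • v i) = ∑ i, ((c i : ℤ)) • v i :=
  Finset.sum_congr rfl fun i _ => (natCast_zsmul _ _).symm

lemma zker_posneg {γ : Fin q → ℤ} (h : (∑ i, γ i • v i) = 0) :
    (∑ i, posExp γ i • v i) = ∑ i, negExp γ i • v i := by
  rw [natSum_eq_intSum, natSum_eq_intSum]
  have key : (∑ i, ((posExp γ i : ℤ)) • v i) - (∑ i, ((negExp γ i : ℤ)) • v i) = 0 := by
    rw [← Finset.sum_sub_distrib, ← h]
    congr 1; funext i
    rw [← sub_smul, posneg_split γ i]
  exact sub_eq_zero.1 key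

lemma IsCircuitVec.neg' {γ : Fin q → ℤ} (h : IsCircuitVec v γ) :
    IsCircuitVec v (fun i => -(γ i)) := by
  obtain ⟨h0, hker, hmin, hgcd⟩ := h
  have hsupp : Function.support (fun i => -(γ i)) = Function.support γ := by
    ext i; simp
  refine ⟨?_, ?_, ?_, ?_⟩
  · intro h
    apply h0
    funext i
    have := congrFun h i
    simp only [Pi.zero_apply] at this ⊢
    omega
  · have : ∀ i, (-(γ i)) • v i = -(γ i • v i) := fun i => neg_smul _ _
    simp_rw [this]
    rw [Finset.sum_neg_distrib, hker, neg_zero]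
  · intro β hβ hβ0 hβsub
    rw [hsupp] at hβsub ⊢
    exact hmin β hβ hβ0 hβsub
  · have hnn : ∀ δ : Fin q → ℤ, 0 ≤ Finset.univ.gcd δ := by
      intro δ
      rw [← Finset.normalize_gcd, ← Int.abs_eq_normalize]
      exact abs_nonneg _
    have h1 : Finset.univ.gcd (fun i => -(γ i)) ∣ Finset.univ.gcd γ :=
      Finset.dvd_gcd fun i _ => by
        have := Finset.gcd_dvd (f := fun i => -(γ i)) (Finset.mem_univ i)
        exact (dvd_neg.1 (by simpa using this.neg_right))
    have h2 : Finset.univ.gcd γ ∣ Finset.univ.gcd (fun i => -(γ i)) :=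
      Finset.dvd_gcd fun i _ => by
        have := Finset.gcd_dvd (f := γ) (Finset.mem_univ i)
        exact this.neg_right
    rw [← hgcd]
    exact Int.dvd_antisymm (hnn _) (hnn _) h1 h2

lemma sqfree_circuit_mem_sqJ {γ : Fin q → ℤ} (hγ : IsCircuitVec v γ)
    (hsq : SqFreePair (posExp γ) (negExp γ)) :
    binom K (posExp γ) (negExp γ) ∈ sqJ K v :=
  Ideal.subset_span ⟨γ, hγ, rfl, hsq⟩

lemma sqJ_le_toric : sqJ K v ≤ toricIdeal K v := by
  apply Ideal.span_le.2
  rintro f ⟨γ, hγ, rfl, -⟩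
  exact Ideal.subset_span ⟨posExp γ, negExp γ, zker_posneg v hγ.2.1, rfl⟩

lemma binom_mem_toric {a b : Fin q → ℕ} (h : (∑ i, a i • v i) = (∑ i, b i • v i)) :
    binom K a b ∈ toricIdeal K v :=
  Ideal.subset_span ⟨a, b, h, rfl⟩

end ToricLemmas


section MainInduction

variable (K : Type*) [Field K] {n q : ℕ} (v : Fin q → Fin n → ℤ)

lemma factor_step
    (hhom : IsHomogeneousConfig v) {d : ℕ}
    (ih : ∀ a b : Fin q → ℕ, (∑ i, a i • v i) = (∑ i, b i • v i) →
      (∑ i, a i) ≤ d → binom K a b ∈ sqJ K v)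
    {a b : Fin q → ℕ}
    (hsum : (∑ i, a i • v i) = (∑ i, b i • v i)) (hd : ∑ i, a i ≤ d + 1)
    (hex : ∃ i, 0 < min (a i) (b i)) : binom K a b ∈ sqJ K v := by
  classical
  obtain ⟨i₀, hi₀⟩ := hex
  set m : Fin q → ℕ := fun i => min (a i) (b i) with hm
  have hma : ∀ i, m i ≤ a i := fun i => min_le_left _ _
  have hmb : ∀ i, m i ≤ b i := fun i => min_le_right _ _
  have hsum_a : (∑ i, a i • v i) = (∑ i, (a i - m i) • v i) + ∑ i, m i • v i := by
    rw [← Finset.sum_add_distrib]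
    apply Finset.sum_congr rfl
    intro i _
    rw [← add_smul]
    congr 1
    have := hma i; omega
  have hsum_b : (∑ i, b i • v i) = (∑ i, (b i - m i) • v i) + ∑ i, m i • v i := by
    rw [← Finset.sum_add_distrib]
    apply Finset.sum_congr rfl
    intro i _
    rw [← add_smul]
    congr 1
    have := hmb i; omega
  have hsum' : (∑ i, (a i - m i) • v i) = ∑ i, (b i - m i) • v i := by
    have h1 := hsum
    rw [hsum_a, hsum_b] at h1
    exact add_right_cancel h1
  have hdeg_a : (∑ i, (a i - m i)) + ∑ i, m i = ∑ i, a i := by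
    rw [← Finset.sum_add_distrib]
    apply Finset.sum_congr rfl
    intro i _
    have := hma i; omega
  have hmsum : 1 ≤ ∑ i, m i := by
    calc 1 ≤ m i₀ := hi₀
      _ ≤ ∑ i, m i := Finset.single_le_sum (fun i _ => Nat.zero_le _) (Finset.mem_univ i₀)
  rw [binom_factor K hma hmb]
  exact Ideal.mul_mem_left _ _ (ih _ _ hsum' (by omega))

lemma case1_step
    (hhom : IsHomogeneousConfig v) {d : ℕ}
    (ih : ∀ a b : Fin q → ℕ, (∑ i, a i • v i) = (∑ i, b i • v i) →
      (∑ i, a i) ≤ d → binom K a b ∈ sqJ K v)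
    {a b : Fin q → ℕ} {γ : Fin q → ℤ}
    (hsum : (∑ i, a i • v i) = (∑ i, b i • v i)) (hd : ∑ i, a i ≤ d + 1)
    (hγ : IsCircuitVec v γ)
    (hconf : Conf (fun i => (a i : ℤ) - b i) γ)
    (hsq : ∀ i, posExp γ i ≤ 1) : binom K a b ∈ sqJ K v := by
  classical
  have hplea : ∀ i, posExp γ i ≤ a i := by
    intro i
    rcases Nat.eq_zero_or_pos (posExp γ i) with h | h
    · omega
    · have hγpos : 0 < γ i := by simp only [posExp] at h; omega
      have h2 := (hconf i).1 hγpos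
      simp only at h2
      have hp1 : posExp γ i ≤ 1 := hsq i
      omega
  set c : Fin q → ℕ := fun i => a i - posExp γ i + negExp γ i with hc
  have hγker := hγ.2.1
  have hzk := zker_posneg v hγker
  have hγdeg : ∑ i, posExp γ i = ∑ i, negExp γ i := deg_eq_of_sum_eq v hhom hzk
  have hnegne : ∃ j, 1 ≤ negExp γ j := by
    by_contra hno
    push_neg at hno
    have hneg0 : ∀ j, negExp γ j = 0 := fun j => by have := hno j; omega
    have hpos0 : ∑ i, posExp γ i = 0 := by
      rw [hγdeg]; exact Finset.sum_eq_zero fun i _ => hneg0 i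
    apply hγ.1
    funext i
    have h1 : posExp γ i = 0 :=
      Finset.sum_eq_zero_iff.1 hpos0 i (Finset.mem_univ i)
    have h2 := posneg_split γ i
    rw [h1, hneg0 i] at h2
    simp only [Pi.zero_apply]
    omega
  obtain ⟨j, hj⟩ := hnegne
  have hbj : 1 ≤ b j := by
    have hγj : γ j < 0 := by simp only [negExp] at hj; omega
    have h2 := (hconf j).2 hγj
    simp only at h2
    omega
  have hsplit : binom K a c + binom K c b = binom K a b := binom_trans K a c b
  rw [← hsplit]
  apply Ideal.add_mem
  · have hmul' : monomial (Finsupp.equivFunOnFinite.symm (fun i => a i - posExp γ i)) (1:K) *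
        binom K (posExp γ) (negExp γ) = binom K a c := by
      rw [monomial_mul_binom]
      have e1 : (fun i => a i - posExp γ i) + posExp γ = a := by
        funext i
        simp only [Pi.add_apply]
        have := hplea i; omega
      have e2 : (fun i => a i - posExp γ i) + negExp γ = c := by
        funext i
        simp only [Pi.add_apply, hc]
      rw [e1, e2]
    rw [← hmul']
    exact Ideal.mul_mem_left _ _ (sqfree_circuit_mem_sqJ K v hγ (Or.inl hsq))
  · have hcsum : (∑ i, c i • v i) = ∑ i, b i • v i := by
      have h1 : (∑ i, c i • v i) + ∑ i, posExp γ i • v i =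
          (∑ i, a i • v i) + ∑ i, negExp γ i • v i := by
        rw [← Finset.sum_add_distrib, ← Finset.sum_add_distrib]
        apply Finset.sum_congr rfl
        intro i _
        rw [← add_smul, ← add_smul]
        congr 1
        have := hplea i
        simp only [hc]
        omega
      rw [hzk] at h1
      exact (add_right_cancel h1).trans hsum
    have hcd : ∑ i, c i ≤ d + 1 := by
      have e1 := deg_eq_of_sum_eq v hhom hcsum
      have e2 := deg_eq_of_sum_eq v hhom hsum
      omega
    apply factor_step K v hhom ih hcsum hcd
    refine ⟨j, ?_⟩
    have hcj : negExp γ j ≤ c j := by simp only [hc]; omega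
    omega


lemma case2_step
    (hhom : IsHomogeneousConfig v) (hnorm : IsNormalConfig v) {d : ℕ}
    (ih : ∀ a b : Fin q → ℕ, (∑ i, a i • v i) = (∑ i, b i • v i) →
      (∑ i, a i) ≤ d → binom K a b ∈ sqJ K v)
    {a b : Fin q → ℕ} {γ : Fin q → ℤ}
    (hsum : (∑ i, a i • v i) = (∑ i, b i • v i)) (hd : ∑ i, a i ≤ d + 1)
    (hdisj : ∀ i, min (a i) (b i) = 0)
    (hconf : Conf (fun i => (a i : ℤ) - b i) γ)
    (hγker : (∑ i, γ i • v i) = 0)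
    (hbalanced : Finset.univ.sup (posExp γ) = Finset.univ.sup (negExp γ))
    (hm2 : 2 ≤ Finset.univ.sup (negExp γ))
    (good : ∃ k, a k ≠ 0 ∧ (2 ≤ a k ∨ γ k ≤ 0)) : binom K a b ∈ sqJ K v := by
  classical
  obtain ⟨k, hak, hgk⟩ := good
  set M : ℕ := Finset.univ.sup (negExp γ) with hM
  have hq0 : Nonempty (Fin q) := ⟨k⟩
  obtain ⟨j, -, hj⟩ := Finset.exists_mem_eq_sup (Finset.univ) Finset.univ_nonempty (negExp γ)
  have hγj : γ j = -(M : ℤ) := by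
    have h1 : (-(γ j)).toNat = M := by rw [hM, hj]; rfl
    omega
  have hγjneg : γ j < 0 := by omega
  have hbj : 1 ≤ b j := by
    have h2 := (hconf j).2 hγjneg
    simp only at h2
    omega
  have haj : a j = 0 := by have := hdisj j; omega
  have hkj : k ≠ j := fun h => hak (h ▸ haj)
  have hbk : b k = 0 := by have := hdisj k; omega
  have hγle : ∀ i, γ i ≤ (M : ℤ) := by
    intro i
    rcases le_or_gt (γ i) 0 with h | h
    · omega
    · have h1 : posExp γ i ≤ Finset.univ.sup (posExp γ) :=
        Finset.le_sup (Finset.mem_univ i)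
      rw [hbalanced] at h1
      simp only [posExp] at h1
      omega
  have hM0 : (0:ℝ) < (M:ℝ) := by
    have : (0:ℕ) < M := by omega
    exact_mod_cast this
  set x : Fin n → ℤ := ∑ i, a i • v i with hx
  set creal : Fin q → ℝ := fun i => (a i : ℝ) - (γ i : ℝ)/(M:ℝ) -
    (if i = k then 1 else 0) - (if i = j then 1 else 0) with hcreal
  have hcnn : ∀ i, 0 ≤ creal i := by
    intro i
    by_cases hik : i = k
    · subst hik
      simp only [hcreal, eq_self_iff_true, if_true, if_neg hkj]
      rcases hgk with h2 | h2
      · have e1 : (γ i : ℝ) ≤ (M:ℝ) := by exact_mod_cast hγle i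
        have e2 : (γ i : ℝ)/(M:ℝ) ≤ 1 := (div_le_one hM0).2 e1
        have e3 : (2:ℝ) ≤ (a i : ℝ) := by exact_mod_cast h2
        linarith
      · have e1 : (γ i : ℝ) ≤ 0 := by exact_mod_cast h2
        have e2 : (γ i : ℝ)/(M:ℝ) ≤ 0 := div_nonpos_of_nonpos_of_nonneg e1 hM0.le
        have e3 : (1:ℝ) ≤ (a i : ℝ) := by
          have : 1 ≤ a i := by omega
          exact_mod_cast this
        linarith
    · by_cases hij : i = j
      · subst hij
        simp only [hcreal, eq_self_iff_true, if_true, if_neg hik]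
        have e1 : (γ i : ℝ) = -(M:ℝ) := by rw [hγj]; push_cast; ring
        rw [e1, haj, neg_div, div_self (ne_of_gt hM0)]
        norm_num
      · simp only [hcreal, if_neg hik, if_neg hij, sub_zero]
        rcases le_or_gt (γ i) 0 with h2 | h2
        · have e1 : (γ i : ℝ) ≤ 0 := by exact_mod_cast h2
          have e2 : (γ i : ℝ)/(M:ℝ) ≤ 0 := div_nonpos_of_nonpos_of_nonneg e1 hM0.le
          have e3 : (0:ℝ) ≤ (a i : ℝ) := by positivity
          linarith
        · have h3 := (hconf i).1 h2
          simp only at h3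
          have e1 : (γ i : ℝ) ≤ (M:ℝ) := by exact_mod_cast hγle i
          have e2 : (γ i : ℝ)/(M:ℝ) ≤ 1 := (div_le_one hM0).2 e1
          have e3 : (1:ℝ) ≤ (a i : ℝ) := by
            have : 1 ≤ a i := by omega
            exact_mod_cast this
          linarith
  have hmem : (x - v k - v j) ∈ AddSubmonoid.closure (Set.range v) := by
    apply (hnorm (x - v k - v j)).2
    constructor
    · apply sub_mem (sub_mem ?_ ?_) ?_
      · exact sum_mem fun i _ =>
          nsmul_mem (AddSubgroup.subset_closure (Set.mem_range_self i)) _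
      · exact AddSubgroup.subset_closure (Set.mem_range_self k)
      · exact AddSubgroup.subset_closure (Set.mem_range_self j)
    · refine ⟨creal, hcnn, ?_⟩
      intro l
      have hker_l : ∑ i, (γ i : ℝ) * (v i l : ℝ) = 0 := by
        have h1 := congrFun hγker l
        simp only [Finset.sum_apply, Pi.smul_apply, smul_eq_mul, Pi.zero_apply] at h1
        exact_mod_cast h1
      have hxl : ((x l : ℤ) : ℝ) = ∑ i, (a i : ℝ) * (v i l : ℝ) := by
        have h1 : x l = ∑ i, (a i : ℤ) * v i l := by
          rw [hx, Finset.sum_apply]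
          apply Finset.sum_congr rfl
          intro i _
          simp [nsmul_eq_mul]
        rw [h1]
        push_cast
        rfl
      have expand : ∀ i, creal i * (v i l : ℝ) =
          (a i : ℝ) * (v i l) - (γ i : ℝ) * (v i l)/(M:ℝ) -
          (if i = k then ((v i l : ℤ):ℝ) else 0) - (if i = j then ((v i l : ℤ):ℝ) else 0) := by
        intro i
        simp only [hcreal]
        split_ifs <;> ring
      rw [Finset.sum_congr rfl fun i _ => expand i]
      rw [Finset.sum_sub_distrib, Finset.sum_sub_distrib, Finset.sum_sub_distrib]
      rw [Finset.sum_ite_eq' Finset.univ k (fun i => ((v i l : ℤ):ℝ)),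
        Finset.sum_ite_eq' Finset.univ j (fun i => ((v i l : ℤ):ℝ))]
      rw [← Finset.sum_div, hker_l, zero_div]
      simp only [Finset.mem_univ, if_true]
      have lhs1 : ((x - v k - v j) l : ℤ) = x l - v k l - v j l := rfl
      rw [lhs1]
      push_cast
      rw [hxl]
      push_cast
      ring
  obtain ⟨e, he⟩ := (mem_addSubmonoid_closure_iff v _).1 hmem
  set cm : Fin q → ℕ := fun i => e i + (if i = k then 1 else 0) + (if i = j then 1 else 0)
    with hcm
  have hcmsum : (∑ i, cm i • v i) = x := by
    have expand : ∀ i, cm i • v i =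
        e i • v i + (if i = k then v i else 0) + (if i = j then v i else 0) := by
      intro i
      simp only [hcm]
      rw [add_smul, add_smul]
      congr 1
      · congr 1
        split_ifs <;> simp
      · split_ifs <;> simp
    rw [Finset.sum_congr rfl fun i _ => expand i]
    rw [Finset.sum_add_distrib, Finset.sum_add_distrib]
    rw [Finset.sum_ite_eq' Finset.univ k v, Finset.sum_ite_eq' Finset.univ j v]
    simp only [Finset.mem_univ, if_true]
    rw [← he]
    abel
  have hcmk : 1 ≤ cm k := by simp only [hcm]; split_ifs <;> omega
  have hcmj : 1 ≤ cm j := by simp only [hcm]; split_ifs <;> omega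
  have hacm : (∑ i, a i • v i) = ∑ i, cm i • v i := by rw [hcmsum]
  have hsplit : binom K a cm + binom K cm b = binom K a b := binom_trans K a cm b
  rw [← hsplit]
  apply Ideal.add_mem
  · apply factor_step K v hhom ih hacm hd
    exact ⟨k, by omega⟩
  · have hcmb : (∑ i, cm i • v i) = ∑ i, b i • v i := by rw [hcmsum, hx]; exact hsum
    have hcmd : ∑ i, cm i ≤ d + 1 := by
      have e1 := deg_eq_of_sum_eq v hhom hacm
      omega
    apply factor_step K v hhom ih hcmb hcmd
    exact ⟨j, by omega⟩


lemma zker_to_qker {γ : Fin q → ℤ} (h : (∑ i, γ i • v i) = 0) :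
    (∑ i, ((γ i : ℚ)) • (fun l => (v i l : ℚ))) = 0 := by
  funext l
  have h1 := congrFun h l
  simp only [Finset.sum_apply, Pi.smul_apply, smul_eq_mul, Pi.zero_apply] at h1 ⊢
  exact_mod_cast h1

lemma key_induction
    (hhom : IsHomogeneousConfig v) (hnorm : IsNormalConfig v)
    (hbal : ∀ α : Fin q → ℤ, IsCircuitVec v α → ¬ SqFreePair (posExp α) (negExp α) →
      Finset.univ.sup (posExp α) = Finset.univ.sup (negExp α)) :
    ∀ d : ℕ, ∀ a b : Fin q → ℕ, (∑ i, a i • v i) = (∑ i, b i • v i) →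
      (∑ i, a i) ≤ d → binom K a b ∈ sqJ K v := by
  intro d
  induction d with
  | zero =>
    intro a b hsum hd
    have hdeg := deg_eq_of_sum_eq v hhom hsum
    have hab : a = b := by
      funext i
      have h1 : a i = 0 := by
        have := Finset.single_le_sum (f := a) (fun i _ => Nat.zero_le _) (Finset.mem_univ i)
        omega
      have h2 : b i = 0 :=
        Finset.sum_eq_zero_iff.1 (by omega) i (Finset.mem_univ i)
      omega
    rw [hab, show binom K b b = 0 from sub_self _]
    exact Ideal.zero_mem _
  | succ d ih =>
    intro a b hsum hd
    by_cases hab : a = b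
    · rw [hab, show binom K b b = 0 from sub_self _]
      exact Ideal.zero_mem _
    by_cases hcom : ∃ i, 0 < min (a i) (b i)
    · exact factor_step K v hhom ih hsum hd hcom
    push_neg at hcom
    have hdisj : ∀ i, min (a i) (b i) = 0 := fun i => by have := hcom i; omega
    have hα0 : (fun i => (a i : ℤ) - b i) ≠ 0 := by
      intro h
      apply hab
      funext i
      have := congrFun h i
      simp only [Pi.zero_apply] at this
      omega
    have hαker : (∑ i, ((a i : ℤ) - b i) • v i) = 0 := by
      have h1 : ∀ i, ((a i : ℤ) - b i) • v i = (a i : ℤ) • v i - (b i : ℤ) • v i :=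
        fun i => sub_smul _ _ _
      rw [Finset.sum_congr rfl fun i _ => h1 i, Finset.sum_sub_distrib,
        ← natSum_eq_intSum, ← natSum_eq_intSum, hsum, sub_self]
    obtain ⟨γ, hγ, hγconf⟩ := exists_conformal_circuit v hαker hα0
    have hγconf' : Conf (fun i => (a i : ℤ) - b i) γ := hγconf
    have hdb : ∑ i, b i ≤ d + 1 := by
      have := deg_eq_of_sum_eq v hhom hsum
      omega
    have hconfB : Conf (fun i => (b i : ℤ) - a i) (fun i => -(γ i)) := by
      have h1 := hγconf'.neg
      have h2 : (fun i => -((a i : ℤ) - b i)) = fun i => (b i : ℤ) - a i := by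
        funext i; ring
      rw [h2] at h1
      exact h1
    by_cases hsq : SqFreePair (posExp γ) (negExp γ)
    · rcases hsq with hsqp | hsqn
      · exact case1_step K v hhom ih hsum hd hγ hγconf' hsqp
      · rw [binom_neg]
        refine neg_mem (case1_step K v hhom ih hsum.symm hdb
          (IsCircuitVec.neg' v hγ) hconfB ?_)
        intro i
        exact hsqn i
    have hbalγ := hbal γ hγ hsq
    obtain ⟨hns1, hns2⟩ := not_or.1 hsq
    push_neg at hns1 hns2
    obtain ⟨i₂, hi₂⟩ := hns2
    have hm2 : 2 ≤ Finset.univ.sup (negExp γ) := by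
      have := Finset.le_sup (f := negExp γ) (Finset.mem_univ i₂)
      omega
    have hposneg : negExp (fun i => -(γ i)) = posExp γ := by
      funext i; simp only [negExp, posExp, neg_neg]
    have hnegpos : posExp (fun i => -(γ i)) = negExp γ := by
      funext i; simp only [negExp, posExp]
    by_cases goodA : ∃ k, a k ≠ 0 ∧ (2 ≤ a k ∨ γ k ≤ 0)
    · exact case2_step K v hhom hnorm ih hsum hd hdisj hγconf' hγ.2.1 hbalγ hm2 goodA
    by_cases goodB : ∃ k, b k ≠ 0 ∧ (2 ≤ b k ∨ 0 ≤ γ k)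
    · rw [binom_neg]
      have hkerB : (∑ i, (-(γ i)) • v i) = 0 := by
        have h1 : ∀ i, (-(γ i)) • v i = -(γ i • v i) := fun i => neg_smul _ _
        rw [Finset.sum_congr rfl fun i _ => h1 i, Finset.sum_neg_distrib, hγ.2.1, neg_zero]
      have hbalB : Finset.univ.sup (posExp (fun i => -(γ i))) =
          Finset.univ.sup (negExp (fun i => -(γ i))) := by
        rw [hposneg, hnegpos, hbalγ]
      have hm2B : 2 ≤ Finset.univ.sup (negExp (fun i => -(γ i))) := by
        rw [hposneg, hbalγ]; exact hm2
      have hdisjB : ∀ i, min (b i) (a i) = 0 := fun i => by have := hdisj i; omega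
      refine neg_mem (case2_step K v hhom hnorm ih hsum.symm hdb hdisjB hconfB
        hkerB hbalB hm2B ?_)
      obtain ⟨k, hk1, hk2⟩ := goodB
      exact ⟨k, hk1, by rcases hk2 with h | h; exact Or.inl h; exact Or.inr (by omega)⟩
    -- both bad: contradiction with gcd = 1
    exfalso
    push_neg at goodA goodB
    set M : ℕ := Finset.univ.sup (negExp γ) with hM
    have hq0 : Nonempty (Fin q) := by
      by_contra h
      apply hα0
      funext i
      exact absurd (Nonempty.intro i) h
    obtain ⟨i₀, -, hi₀⟩ := Finset.exists_mem_eq_sup (Finset.univ) Finset.univ_nonempty (posExp γ)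
    have hγi₀ : γ i₀ = (M : ℤ) := by
      have h1 : posExp γ i₀ = M := by rw [← hi₀, hbalγ]
      simp only [posExp] at h1
      omega
    have hai₀pos : a i₀ ≠ 0 := by
      have h1 := (hγconf' i₀).1 (by omega)
      simp only at h1
      omega
    have hconc : ∀ i, γ i = (M : ℤ) * ((a i : ℤ) - b i) := by
      -- via support-minimality of the circuit γ
      set αq : Fin q → ℚ := fun i => (M : ℚ) * ((a i : ℚ) - (b i : ℚ)) - (γ i : ℚ) with hαq
      have hαqker : (∑ i, αq i • (fun l => (v i l : ℚ))) = 0 := by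
        have h1 := zker_to_qker v hαker
        have h2 := zker_to_qker v hγ.2.1
        funext l
        have h1l := congrFun h1 l
        have h2l := congrFun h2 l
        simp only [Finset.sum_apply, Pi.smul_apply, smul_eq_mul, Pi.zero_apply] at h1l h2l ⊢
        have expand : ∀ i, αq i * (v i l : ℚ) =
            (M : ℚ) * (((a i : ℤ) - (b i : ℤ) : ℤ) : ℚ) * (v i l : ℚ) - (γ i : ℚ) * (v i l : ℚ) := by
          intro i
          simp only [hαq]
          push_cast
          ring
        rw [Finset.sum_congr rfl fun i _ => expand i, Finset.sum_sub_distrib, h2l, sub_zero]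
        have h3 : ∀ i, (M : ℚ) * (((a i : ℤ) - (b i : ℤ) : ℤ) : ℚ) * (v i l : ℚ) =
            (M : ℚ) * ((((a i : ℤ) - (b i : ℤ) : ℤ) : ℚ) * (v i l : ℚ)) := fun i => by ring
        rw [Finset.sum_congr rfl fun i _ => h3 i, ← Finset.mul_sum, h1l, mul_zero]
      by_cases hαq0 : αq = 0
      · intro i
        have h1 := congrFun hαq0 i
        simp only [hαq, Pi.zero_apply, sub_eq_zero] at h1
        have h2 : ((γ i : ℤ) : ℚ) = (((M : ℤ) * ((a i : ℤ) - (b i : ℤ)) : ℤ) : ℚ) := by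
          push_cast
          rw [← h1]
        exact_mod_cast h2
      · -- impossible: αq would have strictly smaller support than the circuit γ
        exfalso
        have hsupsub : Function.support αq ⊆ Function.support γ := by
          intro i hi
          simp only [Function.mem_support] at hi ⊢
          intro hγi
          apply hi
          have hai : a i = 0 := by
            by_contra h
            have := goodA i h
            omega
          have hbi : b i = 0 := by
            by_contra h
            have := goodB i h
            omega
          simp only [hαq, hai, hbi, hγi]
          norm_num
        have h0 : αq i₀ = 0 := by
          have hai₀1 : a i₀ ≤ 1 := by
            have := goodA i₀ hai₀pos
            omega
          have hbi₀ : b i₀ = 0 := by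
            have := hdisj i₀
            omega
          have hai₀' : a i₀ = 1 := by omega
          simp only [hαq, hai₀', hbi₀, hγi₀]
          push_cast
          ring
        have heq := hγ.2.2.1 αq hαqker hαq0 hsupsub
        have : i₀ ∈ Function.support αq := by
          rw [heq]
          simp only [Function.mem_support]
          omega
        exact this h0
    have hdvd : (M : ℤ) ∣ Finset.univ.gcd γ :=
      Finset.dvd_gcd fun i _ => ⟨(a i : ℤ) - b i, hconc i⟩
    rw [hγ.2.2.2] at hdvd
    have := Int.le_of_dvd one_pos hdvd
    omega

end MainInduction

/- ===== main ===== -/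

/-- If each circuit of the toric ideal of a homogeneous normal configuration with
non-square-free terms is balanced, then the toric ideal is generated by a finite set of
circuits with a square-free term. -/
theorem genBySqFreeCircuits_of_balanced (K : Type*) [Field K] {n q : ℕ}
    (hn : 0 < n) (hq : 0 < q) (v : Fin q → Fin n → ℤ)
    (hhom : IsHomogeneousConfig v) (hnorm : IsNormalConfig v)
    (hbal : ∀ α : Fin q → ℤ, IsCircuitVec v α → ¬ SqFreePair (posExp α) (negExp α) →
      Finset.univ.sup (posExp α) = Finset.univ.sup (negExp α)) :
    GenBySqFreeCircuits K v := by
  classical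
  have hJT : sqJ K v = toricIdeal K v := by
    apply le_antisymm (sqJ_le_toric K v)
    apply Ideal.span_le.2
    rintro f ⟨a, b, hsab, rfl⟩
    exact key_induction K v hhom hnorm hbal (∑ i, a i) a b hsab le_rfl
  obtain ⟨S, hS1, hS2⟩ := exists_finset_subset_span_eq
    {g : MvPolynomial (Fin q) K | IsSqFreeCircuitPoly K v g}
  exact ⟨S, fun f hf => hS1 hf, hS2.trans hJT⟩
end

section
/- Let G be a multigraph, A the configuration of characteristic vectors of its edges, and I_A the toric ideal of the edge subring K[G]. If f = T^a − T^b is a circuit of I_A, then f has a square-free term, or f has non-square-free terms and max_i a_i = max_i b_i = 2. -/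
open MvPolynomial

section CircuitAux

open Finset

structure Ctx (n q : ℕ) where
  e₁ : Fin q → Fin n
  e₂ : Fin q → Fin n
  α : Fin q → ℤ
  hne : α ≠ 0
  hker : ∀ l, ∑ k, α k * ((if e₁ k = l then 1 else 0) + (if e₂ k = l then 1 else 0)) = 0
  hmin : ∀ β : Fin q → ℚ,
    (∀ l, ∑ k, β k * ((if e₁ k = l then (1:ℚ) else 0) + (if e₂ k = l then 1 else 0)) = 0) →
    β ≠ 0 → Function.support β ⊆ Function.support α → Function.support β = Function.support α

namespace Ctx

variable {n q : ℕ} (c : Ctx n q)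

def inc (k : Fin q) (l : Fin n) : ℕ :=
  (if c.e₁ k = l then 1 else 0) + (if c.e₂ k = l then 1 else 0)

def S : Finset (Fin q) := Finset.univ.filter (fun k => c.α k ≠ 0)

def deg (l : Fin n) : ℕ := ∑ k ∈ c.S, c.inc k l

lemma mem_S {k : Fin q} : k ∈ c.S ↔ c.α k ≠ 0 := by simp [S]

lemma S_nonempty : c.S.Nonempty := by
  by_contra h
  apply c.hne
  funext k
  by_contra hk
  exact h ⟨k, c.mem_S.2 hk⟩

lemma sum_inc (k : Fin q) : ∑ l, c.inc k l = 2 := by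
  simp [inc, Finset.sum_add_distrib, Finset.sum_ite_eq, Finset.sum_ite_eq']

lemma inc_le_two (k : Fin q) (l : Fin n) : c.inc k l ≤ 2 := by
  unfold inc; split <;> split <;> omega

lemma hkerS (l : Fin n) : ∑ k ∈ c.S, c.α k * (c.inc k l : ℤ) = 0 := by
  have h := c.hker l
  have e : ∑ k ∈ c.S, c.α k * (c.inc k l : ℤ) = ∑ k, c.α k * (c.inc k l : ℤ) :=
    Finset.sum_subset (Finset.subset_univ _) (by
      intro k _ hk
      rw [c.mem_S] at hk
      push_neg at hk
      simp [hk])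
  rw [e, ← h]
  apply Finset.sum_congr rfl
  intro k _
  simp only [inc]
  push_cast
  ring

lemma handshake : ∑ l, c.deg l = 2 * c.S.card := by
  unfold deg
  rw [Finset.sum_comm]
  simp [sum_inc, mul_comm]

lemma deg_ne_one (l : Fin n) : c.deg l ≠ 1 := by
  intro h1
  unfold deg at h1
  obtain ⟨k1, hk1S, hk1⟩ := Finset.exists_ne_zero_of_sum_ne_zero (by rw [h1]; norm_num :
    ∑ k ∈ c.S, c.inc k l ≠ 0)
  have hsplit := Finset.add_sum_erase c.S (fun k => c.inc k l) hk1S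
  rw [h1] at hsplit
  have hinc1 : c.inc k1 l = 1 := by omega
  have hrest : ∑ k ∈ c.S.erase k1, c.inc k l = 0 := by omega
  have hrest0 := Finset.sum_eq_zero_iff.1 hrest
  have hk := c.hkerS l
  rw [← Finset.add_sum_erase c.S (fun k => c.α k * (c.inc k l : ℤ)) hk1S] at hk
  have hz : ∑ k ∈ c.S.erase k1, c.α k * (c.inc k l : ℤ) = 0 :=
    Finset.sum_eq_zero (fun k hk' => by rw [hrest0 k hk']; simp)
  simp only [hz, hinc1] at hk
  simp at hk
  exact (c.mem_S.1 hk1S) hk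

lemma deg2_no_loop {l : Fin n} {k : Fin q} (h2 : c.deg l = 2) (hkS : k ∈ c.S)
    (hloop : c.inc k l = 2) : False := by
  unfold deg at h2
  have hsplit := Finset.add_sum_erase c.S (fun k => c.inc k l) hkS
  rw [h2] at hsplit
  have hrest : ∑ k' ∈ c.S.erase k, c.inc k' l = 0 := by omega
  have hrest0 := Finset.sum_eq_zero_iff.1 hrest
  have hk := c.hkerS l
  rw [← Finset.add_sum_erase c.S (fun k => c.α k * (c.inc k l : ℤ)) hkS] at hk
  have hz : ∑ k' ∈ c.S.erase k, c.α k' * (c.inc k' l : ℤ) = 0 :=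
    Finset.sum_eq_zero (fun k' hk' => by rw [hrest0 k' hk']; simp)
  simp only [hz, hloop] at hk
  have : c.α k = 0 := by push_cast at hk; omega
  exact (c.mem_S.1 hkS) this

lemma deg2_pair {l : Fin n} (h2 : c.deg l = 2) :
    ∃ k k', k ∈ c.S ∧ k' ∈ c.S ∧ k ≠ k' ∧ c.inc k l = 1 ∧ c.inc k' l = 1 ∧
      (∀ k'' ∈ c.S, k'' ≠ k → k'' ≠ k' → c.inc k'' l = 0) ∧ c.α k + c.α k' = 0 := by
  have h2' := h2
  unfold deg at h2'
  obtain ⟨k1, hk1S, hk1⟩ := Finset.exists_ne_zero_of_sum_ne_zero (by rw [h2']; norm_num :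
    ∑ k ∈ c.S, c.inc k l ≠ 0)
  have hsplit := Finset.add_sum_erase c.S (fun k => c.inc k l) hk1S
  rw [h2'] at hsplit
  have hnl : c.inc k1 l ≠ 2 := fun h => c.deg2_no_loop h2 hk1S h
  have hinc1 : c.inc k1 l = 1 := by omega
  have hrest : ∑ k ∈ c.S.erase k1, c.inc k l = 1 := by omega
  obtain ⟨k2, hk2e, hk2⟩ := Finset.exists_ne_zero_of_sum_ne_zero (by rw [hrest]; norm_num :
    ∑ k ∈ c.S.erase k1, c.inc k l ≠ 0)
  have hk2S : k2 ∈ c.S := Finset.mem_of_mem_erase hk2e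
  have hne12 : k2 ≠ k1 := Finset.ne_of_mem_erase hk2e
  have hsplit2 := Finset.add_sum_erase (c.S.erase k1) (fun k => c.inc k l) hk2e
  rw [hrest] at hsplit2
  have hinc2 : c.inc k2 l = 1 := by omega
  have hrest2 : ∑ k ∈ (c.S.erase k1).erase k2, c.inc k l = 0 := by omega
  have hrest0 := Finset.sum_eq_zero_iff.1 hrest2
  have hzero : ∀ k'' ∈ c.S, k'' ≠ k1 → k'' ≠ k2 → c.inc k'' l = 0 := by
    intro k'' hS hne1 hne2
    exact hrest0 k'' (Finset.mem_erase.2 ⟨hne2, Finset.mem_erase.2 ⟨hne1, hS⟩⟩)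
  have hk := c.hkerS l
  rw [← Finset.add_sum_erase c.S (fun k => c.α k * (c.inc k l : ℤ)) hk1S,
    ← Finset.add_sum_erase (c.S.erase k1) (fun k => c.α k * (c.inc k l : ℤ)) hk2e] at hk
  have hz : ∑ k ∈ (c.S.erase k1).erase k2, c.α k * (c.inc k l : ℤ) = 0 :=
    Finset.sum_eq_zero (fun k hk' => by rw [hrest0 k hk']; simp)
  simp only [hz, hinc1, hinc2] at hk
  refine ⟨k1, k2, hk1S, hk2S, hne12.symm, hinc1, hinc2, hzero, by push_cast at hk; omega⟩

lemma inc_castQ (k : Fin q) (l : Fin n) :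
    ((c.inc k l : ℕ) : ℚ) = (if c.e₁ k = l then 1 else 0) + (if c.e₂ k = l then 1 else 0) := by
  unfold inc; push_cast; split <;> split <;> norm_num

lemma hmin' (β : Fin q → ℚ) (hk : ∀ l, ∑ k, β k * (c.inc k l : ℚ) = 0) (hb : β ≠ 0)
    (hsub : Function.support β ⊆ Function.support c.α) :
    Function.support β = Function.support c.α := by
  apply c.hmin β _ hb hsub
  intro l
  have e : ∑ k, β k * ((if c.e₁ k = l then (1:ℚ) else 0) + (if c.e₂ k = l then 1 else 0)) =
      ∑ k, β k * (c.inc k l : ℚ) :=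
    Finset.sum_congr rfl (fun k _ => by rw [c.inc_castQ])
  rw [e]
  exact hk l

def T : Finset (Fin n) := Finset.univ.filter (fun l => c.deg l ≠ 0)

lemma mem_T {l : Fin n} : l ∈ c.T ↔ c.deg l ≠ 0 := by simp [T]

lemma mem_T_of_inc {k : Fin q} {l : Fin n} (hkS : k ∈ c.S) (h : c.inc k l ≠ 0) : l ∈ c.T := by
  rw [c.mem_T]
  intro h0
  exact h (Finset.sum_eq_zero_iff.1 h0 k hkS)

lemma inc_zero_off_T {k : Fin q} {l : Fin n} (hkS : k ∈ c.S) (h : l ∉ c.T) : c.inc k l = 0 := by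
  by_contra h'
  exact h (c.mem_T_of_inc hkS h')

lemma card_S_le : c.S.card ≤ c.T.card + 1 := by
  obtain ⟨j0, hj0⟩ := c.S_nonempty
  let φ : (↥c.S → ℚ) →ₗ[ℚ] (↥c.T → ℚ) × ℚ :=
    { toFun := fun g => (fun l => ∑ k : ↥c.S, g k * (c.inc k.1 l.1 : ℚ), g ⟨j0, hj0⟩),
      map_add' := by
        intro g h; ext l
        · simp [add_mul, Finset.sum_add_distrib]
        · simp,
      map_smul' := by
        intro r g; ext l
        · simp [Finset.mul_sum, mul_assoc]
        · simp }
  have hinj : Function.Injective φ := by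
    rw [injective_iff_map_eq_zero]
    intro g hg
    by_contra hgne
    set β : Fin q → ℚ := fun k => if h : k ∈ c.S then g ⟨k, h⟩ else 0 with hβ
    have hβS : ∀ (k) (h : k ∈ c.S), β k = g ⟨k, h⟩ := by intro k h; simp [hβ, h]
    have hβ0 : ∀ k, k ∉ c.S → β k = 0 := by intro k h; simp [hβ, h]
    have hgl : ∀ l : ↥c.T, ∑ k : ↥c.S, g k * (c.inc k.1 l.1 : ℚ) = 0 := by
      intro l
      have := congrArg Prod.fst hg
      exact congrFun this l
    have hker : ∀ l, ∑ k, β k * (c.inc k l : ℚ) = 0 := by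
      intro l
      have hrestr : ∑ k, β k * (c.inc k l : ℚ) = ∑ k ∈ c.S, β k * (c.inc k l : ℚ) :=
        (Finset.sum_subset (Finset.subset_univ _) (by
          intro k _ hk; rw [hβ0 k hk]; ring)).symm
      rw [hrestr]
      by_cases hlT : l ∈ c.T
      · have := hgl ⟨l, hlT⟩
        rw [← Finset.sum_coe_sort c.S (fun k => β k * (c.inc k l : ℚ))]
        rw [← this]
        exact Finset.sum_congr rfl (fun k _ => by rw [hβS k.1 k.2])
      · exact Finset.sum_eq_zero (fun k hk => by rw [c.inc_zero_off_T hk hlT]; simp)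
    have hβne : β ≠ 0 := by
      intro h0
      apply hgne
      funext k
      have := congrFun h0 k.1
      rw [hβS k.1 k.2] at this
      exact this
    have hsub : Function.support β ⊆ Function.support c.α := by
      intro k hk
      simp only [Function.mem_support] at hk ⊢
      intro h0
      exact hk (by rw [hβ0 k (by rw [c.mem_S]; simp [h0])])
    have hs := c.hmin' β hker hβne hsub
    have hj0s : j0 ∈ Function.support β := by
      rw [hs]
      exact c.mem_S.1 hj0
    have : β j0 = 0 := by
      rw [hβS j0 hj0]
      exact congrArg Prod.snd hg
    exact hj0s this
  have hle := LinearMap.finrank_le_finrank_of_injective hinj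
  rw [Module.finrank_prod, Module.finrank_fintype_fun_eq_card,
    Module.finrank_fintype_fun_eq_card, Module.finrank_self, Fintype.card_coe,
    Fintype.card_coe] at hle
  exact hle

lemma deg_ge_two {l : Fin n} (h : l ∈ c.T) : 2 ≤ c.deg l := by
  have h1 := c.deg_ne_one l
  have h0 := c.mem_T.1 h
  omega

lemma sum_deg_T : ∑ l ∈ c.T, c.deg l = 2 * c.S.card := by
  rw [← c.handshake]
  exact Finset.sum_subset (Finset.subset_univ _) (by
    intro l _ hl
    by_contra h
    exact hl (c.mem_T.2 h))

def J : Finset (Fin n) := c.T.filter (fun l => 3 ≤ c.deg l)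

lemma mem_J {l : Fin n} : l ∈ c.J ↔ 3 ≤ c.deg l := by
  constructor
  · intro h; exact (Finset.mem_filter.1 h).2
  · intro h; exact Finset.mem_filter.2 ⟨c.mem_T.2 (by omega), h⟩

lemma deg_two_of_not_J {l : Fin n} (h : l ∉ c.J) : c.deg l = 0 ∨ c.deg l = 2 := by
  by_cases hT : l ∈ c.T
  · have := c.deg_ge_two hT
    have h3 : ¬ 3 ≤ c.deg l := fun h' => h (c.mem_J.2 h')
    omega
  · left
    by_contra h'
    exact hT (c.mem_T.2 h')

lemma sum_J : 2 * c.T.card + ∑ l ∈ c.J, (c.deg l - 2) = 2 * c.S.card := by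
  rw [← c.sum_deg_T]
  have hJT : c.J ⊆ c.T := Finset.filter_subset _ _
  have e1 : ∑ l ∈ c.T, c.deg l = ∑ l ∈ c.T, (2 + (c.deg l - 2)) :=
    Finset.sum_congr rfl (fun l hl => by have := c.deg_ge_two hl; omega)
  rw [e1, Finset.sum_add_distrib]
  have e2 : ∑ l ∈ c.T, (c.deg l - 2) = ∑ l ∈ c.J, (c.deg l - 2) :=
    (Finset.sum_subset hJT (by
      intro l hl hlJ
      have := c.deg_ge_two hl
      have h3 : ¬ 3 ≤ c.deg l := fun h' => hlJ (c.mem_J.2 h')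
      omega)).symm
  rw [e2]
  simp [mul_comm]

/-- The three scenarios for junctions. -/
lemma junction_cases :
    c.J = ∅ ∨ (∃ u, c.J = {u} ∧ c.deg u = 4) ∨
      (∃ u w, u ≠ w ∧ c.J = {u, w} ∧ c.deg u = 3 ∧ c.deg w = 3) := by
  have hSle := c.card_S_le
  have hTle : c.T.card ≤ c.S.card := by
    have := c.sum_deg_T
    have h2 : 2 * c.T.card ≤ ∑ l ∈ c.T, c.deg l := by
      calc 2 * c.T.card = ∑ _l ∈ c.T, 2 := by simp [mul_comm]
      _ ≤ _ := Finset.sum_le_sum (fun l hl => c.deg_ge_two hl)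
    omega
  have hsum := c.sum_J
  have hE : ∑ l ∈ c.J, (c.deg l - 2) ≤ 2 := by omega
  have hone : ∀ l ∈ c.J, 1 ≤ c.deg l - 2 := fun l hl => by
    have := c.mem_J.1 hl; omega
  have hcard : c.J.card ≤ 2 := by
    calc c.J.card = ∑ _l ∈ c.J, 1 := by simp
    _ ≤ ∑ l ∈ c.J, (c.deg l - 2) := Finset.sum_le_sum hone
    _ ≤ 2 := hE
  have hEeven : ∑ l ∈ c.J, (c.deg l - 2) = 0 ∨ ∑ l ∈ c.J, (c.deg l - 2) = 2 := by omega
  rcases hEeven with hE0 | hE2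
  · left
    rw [Finset.eq_empty_iff_forall_notMem]
    intro l hl
    have := hone l hl
    have := (Finset.sum_eq_zero_iff.1 hE0) l hl
    omega
  · interval_cases h : c.J.card
    · rw [Finset.card_eq_zero.1 h] at hE2
      simp at hE2
    · obtain ⟨u, hu⟩ := Finset.card_eq_one.1 h
      right; left
      refine ⟨u, hu, ?_⟩
      rw [hu] at hE2
      simp at hE2
      have : u ∈ c.J := by rw [hu]; exact Finset.mem_singleton_self u
      have := c.mem_J.1 this
      omega
    · obtain ⟨u, w, huw, huvw⟩ := Finset.card_eq_two.1 h
      right; right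
      refine ⟨u, w, huw, huvw, ?_, ?_⟩
      all_goals {
        rw [huvw] at hE2
        rw [Finset.sum_pair huw] at hE2
        have hu3 : u ∈ c.J := by rw [huvw]; simp
        have hw3 : w ∈ c.J := by rw [huvw]; simp
        have := c.mem_J.1 hu3
        have := c.mem_J.1 hw3
        omega }

def Rel (k k' : Fin q) : Prop :=
  k ∈ c.S ∧ k' ∈ c.S ∧ ∃ l, c.deg l = 2 ∧ 1 ≤ c.inc k l ∧ 1 ≤ c.inc k' l

lemma rel_alpha {k k' : Fin q} (h : c.Rel k k') (hne : k ≠ k') : c.α k + c.α k' = 0 := by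
  obtain ⟨hkS, hk'S, l, hdeg, hik, hik'⟩ := h
  obtain ⟨a, b, haS, hbS, hab, hia, hib, hz, hαab⟩ := c.deg2_pair hdeg
  have hka : k = a ∨ k = b := by
    by_contra hc
    push_neg at hc
    have := hz k hkS hc.1 hc.2
    omega
  have hk'a : k' = a ∨ k' = b := by
    by_contra hc
    push_neg at hc
    have := hz k' hk'S hc.1 hc.2
    omega
  rcases hka with rfl | rfl <;> rcases hk'a with rfl | rfl
  · exact absurd rfl hne
  · exact hαab
  · omega
  · exact absurd rfl hne

lemma abs_eqvgen {k k' : Fin q} (h : Relation.EqvGen c.Rel k k') : |c.α k| = |c.α k'| := by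
  induction h with
  | rel x y hxy =>
    by_cases hne : x = y
    · rw [hne]
    · have := c.rel_alpha hxy hne
      have : c.α y = -c.α x := by omega
      rw [this, abs_neg]
  | refl x => rfl
  | symm x y _ ih => omega
  | trans x y z _ _ ih1 ih2 => omega

lemma mem_S_eqvgen {k k' : Fin q} (h : Relation.EqvGen c.Rel k k') :
    k = k' ∨ (k ∈ c.S ∧ k' ∈ c.S) := by
  induction h with
  | rel x y hxy => exact Or.inr ⟨hxy.1, hxy.2.1⟩
  | refl x => exact Or.inl rfl
  | symm x y _ ih => tauto
  | trans x y z _ _ ih1 ih2 =>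
    rcases ih1 with rfl | h1
    · exact ih2
    · rcases ih2 with rfl | h2
      · exact Or.inr h1
      · exact Or.inr ⟨h1.1, h2.2⟩

open Classical in
noncomputable def Cl (k : Fin q) : Finset (Fin q) :=
  c.S.filter (fun k' => Relation.EqvGen c.Rel k k')

lemma eqv : Equivalence (Relation.EqvGen c.Rel) := Relation.EqvGen.is_equivalence _

lemma mem_Cl {k k' : Fin q} : k' ∈ c.Cl k ↔ k' ∈ c.S ∧ Relation.EqvGen c.Rel k k' := by
  simp [Cl]

lemma mem_Cl_self {k : Fin q} (h : k ∈ c.S) : k ∈ c.Cl k :=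
  c.mem_Cl.2 ⟨h, Relation.EqvGen.refl k⟩

lemma Cl_eq {k k' : Fin q} (h : Relation.EqvGen c.Rel k k') : c.Cl k = c.Cl k' := by
  ext x
  simp only [mem_Cl]
  constructor
  · rintro ⟨hx, he⟩; exact ⟨hx, (c.eqv.trans (c.eqv.symm h) he)⟩
  · rintro ⟨hx, he⟩; exact ⟨hx, c.eqv.trans h he⟩

noncomputable def CLS : Finset (Finset (Fin q)) := c.S.image c.Cl

lemma Cl_mem_CLS {k : Fin q} (h : k ∈ c.S) : c.Cl k ∈ c.CLS :=
  Finset.mem_image_of_mem _ h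

lemma CLS_sub {C : Finset (Fin q)} (h : C ∈ c.CLS) : C ⊆ c.S := by
  obtain ⟨a, _, rfl⟩ := Finset.mem_image.1 h
  intro x hx
  exact (c.mem_Cl.1 hx).1

lemma CLS_disj {A B : Finset (Fin q)} (hA : A ∈ c.CLS) (hB : B ∈ c.CLS) (hne : A ≠ B) :
    Disjoint A B := by
  obtain ⟨a, haS, rfl⟩ := Finset.mem_image.1 hA
  obtain ⟨b, hbS, rfl⟩ := Finset.mem_image.1 hB
  rw [Finset.disjoint_left]
  intro x hxa hxb
  exact hne (c.Cl_eq (c.eqv.trans (c.mem_Cl.1 hxa).2 (c.eqv.symm (c.mem_Cl.1 hxb).2)))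

lemma CLS_biUnion : c.CLS.biUnion id = c.S := by
  ext k
  simp only [Finset.mem_biUnion, id]
  constructor
  · rintro ⟨C, hC, hk⟩; exact c.CLS_sub hC hk
  · intro h; exact ⟨c.Cl k, c.Cl_mem_CLS h, c.mem_Cl_self h⟩

lemma sum_CLS {M : Type*} [AddCommMonoid M] (F : Fin q → M) :
    ∑ k ∈ c.S, F k = ∑ C ∈ c.CLS, ∑ k ∈ C, F k := by
  have hd : (↑c.CLS : Set (Finset (Fin q))).PairwiseDisjoint id :=
    fun A hA B hB hne => c.CLS_disj hA hB hne
  conv_lhs => rw [← c.CLS_biUnion]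
  rw [Finset.sum_biUnion hd]
  rfl

lemma CLS_val {C : Finset (Fin q)} (h : C ∈ c.CLS) :
    ∃ m : ℤ, 0 < m ∧ ∀ k ∈ C, c.α k = m ∨ c.α k = -m := by
  obtain ⟨a, haS, rfl⟩ := Finset.mem_image.1 h
  refine ⟨|c.α a|, abs_pos.2 (c.mem_S.1 haS), ?_⟩
  intro k hk
  have := c.abs_eqvgen (c.mem_Cl.1 hk).2
  rcases abs_cases (c.α k) with ⟨h1, _⟩ | ⟨h1, _⟩ <;> omega

lemma CLS_closed {C : Finset (Fin q)} (h : C ∈ c.CLS) {k k' : Fin q} (hk : k ∈ C)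
    (hr : c.Rel k k') : k' ∈ C := by
  obtain ⟨a, haS, rfl⟩ := Finset.mem_image.1 h
  exact c.mem_Cl.2 ⟨hr.2.1, c.eqv.trans (c.mem_Cl.1 hk).2 (Relation.EqvGen.rel _ _ hr)⟩

lemma CLS_nonempty {C : Finset (Fin q)} (h : C ∈ c.CLS) : C.Nonempty := by
  obtain ⟨a, haS, rfl⟩ := Finset.mem_image.1 h
  exact ⟨a, c.mem_Cl_self haS⟩

lemma signsum (C : Finset (Fin q)) (m : ℤ) (hm : ∀ k ∈ C, c.α k = m ∨ c.α k = -m)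
    (l : Fin n) :
    ∃ s : ℤ, ∑ k ∈ C, c.α k * (c.inc k l : ℤ) = m * s ∧
      |s| ≤ (∑ k ∈ C, (c.inc k l : ℤ)) ∧ 2 ∣ (s - ∑ k ∈ C, (c.inc k l : ℤ)) := by
  classical
  induction C using Finset.induction_on with
  | empty => exact ⟨0, by simp⟩
  | @insert a C ha ih =>
    obtain ⟨s, hs1, hs2, hs3⟩ := ih (fun k hk => hm k (Finset.mem_insert_of_mem hk))
    have habs : |s| ≤ ∑ k ∈ C, (c.inc k l : ℤ) := hs2
    rw [Finset.sum_insert ha, Finset.sum_insert ha]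
    rcases hm a (Finset.mem_insert_self a C) with hma | hma
    · refine ⟨s + (c.inc a l : ℤ), by rw [hs1, hma]; ring, ?_, ?_⟩
      · have h1 := abs_add_le s (c.inc a l : ℤ)
        have h2 : |(c.inc a l : ℤ)| = (c.inc a l : ℤ) := abs_of_nonneg (by positivity)
        linarith
      · obtain ⟨e, he⟩ := hs3
        exact ⟨e, by linarith⟩
    · refine ⟨s - (c.inc a l : ℤ), by rw [hs1, hma]; ring, ?_, ?_⟩
      · have h1 := abs_sub s (c.inc a l : ℤ)
        have h2 : |(c.inc a l : ℤ)| = (c.inc a l : ℤ) := abs_of_nonneg (by positivity)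
        linarith
      · obtain ⟨e, he⟩ := hs3
        exact ⟨e - (c.inc a l : ℤ), by linarith⟩

def cC (C : Finset (Fin q)) (l : Fin n) : ℤ := ∑ k ∈ C, c.α k * (c.inc k l : ℤ)

def jC (C : Finset (Fin q)) (l : Fin n) : ℕ := ∑ k ∈ C, c.inc k l

lemma sum_jC (l : Fin n) : ∑ C ∈ c.CLS, c.jC C l = c.deg l := (c.sum_CLS _).symm

lemma sum_cC (l : Fin n) : ∑ C ∈ c.CLS, c.cC C l = 0 := by
  simp only [cC]
  rw [← c.sum_CLS (fun k => c.α k * (c.inc k l : ℤ))]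
  exact c.hkerS l

lemma cC_spec (C : Finset (Fin q)) (m : ℤ) (hm : ∀ k ∈ C, c.α k = m ∨ c.α k = -m)
    (l : Fin n) :
    ∃ s : ℤ, c.cC C l = m * s ∧ |s| ≤ (c.jC C l : ℤ) ∧ 2 ∣ (s - (c.jC C l : ℤ)) := by
  obtain ⟨s, h1, h2, h3⟩ := c.signsum C m hm l
  exact ⟨s, h1, by rwa [jC, Nat.cast_sum], by rwa [jC, Nat.cast_sum]⟩

lemma cC_one {C : Finset (Fin q)} {m : ℤ} (hm : ∀ k ∈ C, c.α k = m ∨ c.α k = -m)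
    {l : Fin n} (hj : c.jC C l = 1) : c.cC C l = m ∨ c.cC C l = -m := by
  obtain ⟨s, h1, h2, h3⟩ := c.cC_spec C m hm l
  rw [hj] at h2 h3
  obtain ⟨hl1, hl2⟩ := abs_le.1 h2
  have : s = 1 ∨ s = -1 := by push_cast at hl1 hl2 h3 ⊢; omega
  rcases this with rfl | rfl
  · left; omega
  · right; omega

lemma cC_two {C : Finset (Fin q)} {m : ℤ} (hm : ∀ k ∈ C, c.α k = m ∨ c.α k = -m)
    {l : Fin n} (hj : c.jC C l = 2) : c.cC C l = 0 ∨ c.cC C l = 2*m ∨ c.cC C l = -(2*m) := by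
  obtain ⟨s, h1, h2, h3⟩ := c.cC_spec C m hm l
  rw [hj] at h2 h3
  obtain ⟨hl1, hl2⟩ := abs_le.1 h2
  have : s = 0 ∨ s = 2 ∨ s = -2 := by push_cast at hl1 hl2 h3 ⊢; omega
  rcases this with rfl | rfl | rfl
  · left; omega
  · right; left; omega
  · right; right; omega

lemma cC_odd {C : Finset (Fin q)} {m : ℤ} (hm0 : 0 < m)
    (hm : ∀ k ∈ C, c.α k = m ∨ c.α k = -m)
    {l : Fin n} (hj : c.jC C l = 1 ∨ c.jC C l = 3) : c.cC C l ≠ 0 := by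
  obtain ⟨s, h1, h2, h3⟩ := c.cC_spec C m hm l
  have hs : s ≠ 0 := by
    rcases hj with hj | hj <;> rw [hj] at h3 <;> intro h0 <;> rw [h0] at h3 <;>
      · obtain ⟨e, he⟩ := h3; push_cast at he; omega
  rw [h1]
  exact mul_ne_zero (by omega) hs

lemma jC_zero {C : Finset (Fin q)} {l : Fin n} (hj : c.jC C l = 0) : c.cC C l = 0 := by
  unfold cC
  apply Finset.sum_eq_zero
  intro k hk
  have := Finset.sum_eq_zero_iff.1 hj k hk
  rw [this]
  simp

lemma KS (t : Fin q → ℚ) (ht0 : ∀ k, k ∉ c.S → t k = 0)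
    (htc : ∀ k k', c.Rel k k' → t k = t k')
    (hJ : ∀ l ∈ c.J, ∑ k ∈ c.S, t k * (c.α k : ℚ) * (c.inc k l : ℚ) = 0)
    (k1 : Fin q) (hk1 : k1 ∈ c.S) (ht1 : t k1 ≠ 0)
    (k0 : Fin q) (hk0 : k0 ∈ c.S) (ht00 : t k0 = 0) : False := by
  set β : Fin q → ℚ := fun k => t k * (c.α k : ℚ) with hβ
  have hker : ∀ l, ∑ k, β k * (c.inc k l : ℚ) = 0 := by
    intro l
    have hrestr : ∑ k, β k * (c.inc k l : ℚ) = ∑ k ∈ c.S, β k * (c.inc k l : ℚ) :=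
      (Finset.sum_subset (Finset.subset_univ _) (by
        intro k _ hk
        rw [hβ]
        simp only
        rw [ht0 k hk]
        ring)).symm
    rw [hrestr]
    by_cases hlJ : l ∈ c.J
    · calc ∑ k ∈ c.S, β k * (c.inc k l : ℚ)
          = ∑ k ∈ c.S, t k * (c.α k : ℚ) * (c.inc k l : ℚ) :=
            Finset.sum_congr rfl (fun k _ => by rw [hβ])
        _ = 0 := hJ l hlJ
    · rcases c.deg_two_of_not_J hlJ with hd | hd
      · apply Finset.sum_eq_zero
        intro k hk
        have : c.inc k l = 0 := Finset.sum_eq_zero_iff.1 hd k hk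
        rw [this]
        simp
      · obtain ⟨a, b, haS, hbS, hab, hia, hib, hz, hαab⟩ := c.deg2_pair hd
        have hsub : ({a, b} : Finset (Fin q)) ⊆ c.S := by
          intro x hx
          rcases Finset.mem_insert.1 hx with rfl | hx
          · exact haS
          · rw [Finset.mem_singleton.1 hx]; exact hbS
        have hvan : ∀ x ∈ c.S, x ∉ ({a, b} : Finset (Fin q)) → β x * (c.inc x l : ℚ) = 0 := by
          intro x hxS hx
          simp only [Finset.mem_insert, Finset.mem_singleton] at hx
          push_neg at hx
          rw [hz x hxS hx.1 hx.2]
          simp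
        rw [← Finset.sum_subset hsub hvan, Finset.sum_pair hab]
        have hrel : c.Rel a b := ⟨haS, hbS, l, hd, by omega, by omega⟩
        have hteq : t a = t b := htc a b hrel
        rw [hβ]
        simp only
        rw [hia, hib, hteq]
        have hcast : (c.α a : ℚ) + (c.α b : ℚ) = 0 := by
          have h' : ((c.α a + c.α b : ℤ) : ℚ) = 0 := by rw [hαab]; simp
          push_cast at h'
          linarith
        push_cast
        linear_combination t b * hcast
  have hβne : β ≠ 0 := by
    intro h0
    have := congrFun h0 k1
    rw [hβ] at this
    simp only [Pi.zero_apply] at this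
    rcases mul_eq_zero.1 this with h | h
    · exact ht1 h
    · exact (c.mem_S.1 hk1) (by exact_mod_cast h)
  have hsub : Function.support β ⊆ Function.support c.α := by
    intro k hk
    simp only [Function.mem_support, hβ] at hk ⊢
    intro h0
    apply hk
    rw [h0]
    simp
  have hs := c.hmin' β hker hβne hsub
  have hk0s : k0 ∈ Function.support β := by
    rw [hs]
    exact c.mem_S.1 hk0
  apply hk0s
  rw [hβ]
  simp only
  rw [ht00]
  ring

lemma class_eq_S {C : Finset (Fin q)} (hC : C ∈ c.CLS)
    (hcC : ∀ l ∈ c.J, c.cC C l = 0) : C = c.S := by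
  by_contra hne
  have hsub := c.CLS_sub hC
  obtain ⟨k0, hk0S, hk0C⟩ : ∃ k0, k0 ∈ c.S ∧ k0 ∉ C := by
    by_contra h
    push_neg at h
    exact hne (Finset.Subset.antisymm hsub (fun x hx => h x hx))
  obtain ⟨k1, hk1C⟩ := c.CLS_nonempty hC
  classical
  apply c.KS (fun k => if k ∈ C then (1:ℚ) else 0)
    (fun k hk => by
      have hkC : k ∉ C := fun h => hk (hsub h)
      simp [hkC])
    (fun k k' hr => ?_) (fun l hl => ?_) k1 (hsub hk1C) (by simp [hk1C]) k0 hk0S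
    (by simp [hk0C])
  · by_cases h : k ∈ C
    · simp [h, c.CLS_closed hC h hr]
    · have h' : k' ∉ C := fun h'' =>
        h (c.CLS_closed hC h'' ⟨hr.2.1, hr.1, hr.2.2.choose,
          hr.2.2.choose_spec.1, hr.2.2.choose_spec.2.2, hr.2.2.choose_spec.2.1⟩)
      simp [h, h']
  · have : ∑ k ∈ c.S, (if k ∈ C then (1:ℚ) else 0) * (c.α k : ℚ) * (c.inc k l : ℚ)
        = ∑ k ∈ C, (c.α k : ℚ) * (c.inc k l : ℚ) := by
      rw [← Finset.sum_subset hsub (by intro x _ hx; simp [hx])]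
      exact Finset.sum_congr rfl (fun x hx => by simp [hx])
    rw [this]
    have hcast : ((c.cC C l : ℤ) : ℚ) = 0 := by rw [hcC l hl]; simp
    calc ∑ k ∈ C, (c.α k : ℚ) * (c.inc k l : ℚ) = ((c.cC C l : ℤ) : ℚ) := by
          simp only [cC]
          push_cast
          rfl
      _ = 0 := hcast

lemma jC_notJ {C : Finset (Fin q)} (hC : C ∈ c.CLS) {l : Fin n} (hl : l ∉ c.J) :
    c.jC C l = 0 ∨ c.jC C l = 2 := by
  by_cases h0 : c.jC C l = 0
  · exact Or.inl h0
  right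
  obtain ⟨k, hkC, hk⟩ := Finset.exists_ne_zero_of_sum_ne_zero h0
  have hkS := c.CLS_sub hC hkC
  have hlT := c.mem_T_of_inc hkS hk
  have hdeg : c.deg l = 2 := by
    rcases c.deg_two_of_not_J hl with h | h
    · exact absurd h (c.mem_T.1 hlT)
    · exact h
  obtain ⟨a, b, haS, hbS, hab, hia, hib, hz, hαab⟩ := c.deg2_pair hdeg
  have haC : a ∈ C := c.CLS_closed hC hkC ⟨hkS, haS, l, hdeg, by omega, by omega⟩
  have hbC : b ∈ C := c.CLS_closed hC hkC ⟨hkS, hbS, l, hdeg, by omega, by omega⟩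
  have hle : c.jC C l ≤ 2 := by
    rw [← hdeg]
    exact Finset.sum_le_sum_of_subset (c.CLS_sub hC)
  have hge : 2 ≤ c.jC C l := by
    have hsub : ({a, b} : Finset (Fin q)) ⊆ C := by
      intro x hx
      rcases Finset.mem_insert.1 hx with rfl | hx
      · exact haC
      · rw [Finset.mem_singleton.1 hx]; exact hbC
    calc 2 = ∑ x ∈ ({a, b} : Finset (Fin q)), c.inc x l := by
          rw [Finset.sum_pair hab, hia, hib]
      _ ≤ c.jC C l := Finset.sum_le_sum_of_subset hsub
  omega

lemma endJ_even {C : Finset (Fin q)} (hC : C ∈ c.CLS) : 2 ∣ ∑ l ∈ c.J, c.jC C l := by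
  classical
  have htot : ∑ l, c.jC C l = 2 * C.card := by
    unfold jC
    rw [Finset.sum_comm]
    simp [sum_inc, mul_comm]
  have hsplit := Finset.sum_filter_add_sum_filter_not Finset.univ (fun l => l ∈ c.J)
    (fun l => c.jC C l)
  have hfil : Finset.univ.filter (fun l => l ∈ c.J) = c.J := by
    ext l; simp
  rw [hfil, htot] at hsplit
  have hrest : 2 ∣ ∑ l ∈ Finset.univ.filter (fun l => l ∉ c.J), c.jC C l := by
    apply Finset.dvd_sum
    intro l hl
    rcases c.jC_notJ hC (Finset.mem_filter.1 hl).2 with h | h <;> omega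
  omega

lemma endJ_pos {C : Finset (Fin q)} (hC : C ∈ c.CLS) (hJne : c.J.Nonempty) :
    2 ≤ ∑ l ∈ c.J, c.jC C l := by
  have heven := c.endJ_even hC
  rcases Nat.eq_zero_or_pos (∑ l ∈ c.J, c.jC C l) with h0 | hpos
  · exfalso
    have hz : ∀ l ∈ c.J, c.jC C l = 0 := Finset.sum_eq_zero_iff.1 h0
    have hCS := c.class_eq_S hC (fun l hl => c.jC_zero (hz l hl))
    obtain ⟨u, hu⟩ := hJne
    have := c.mem_J.1 hu
    have : c.jC C u = c.deg u := by rw [hCS]; rfl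
    have := hz u hu
    omega
  · omega

lemma sum_endJ : ∑ C ∈ c.CLS, ∑ l ∈ c.J, c.jC C l = ∑ l ∈ c.J, c.deg l := by
  rw [Finset.sum_comm]
  exact Finset.sum_congr rfl (fun l _ => c.sum_jC l)

def Good : Prop := ∃ m : ℤ, 0 < m ∧ ∀ k, c.α k = 0 ∨ c.α k = m ∨ c.α k = -m ∨
  c.α k = 2*m ∨ c.α k = -(2*m)

lemma good_card_one (hcard : c.CLS.card = 1) : c.Good := by
  obtain ⟨A, hA⟩ := Finset.card_eq_one.1 hcard
  have hAS : A = c.S := by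
    rw [← c.CLS_biUnion, hA]
    simp
  have hAmem : A ∈ c.CLS := by rw [hA]; simp
  obtain ⟨m, hm, hval⟩ := c.CLS_val hAmem
  refine ⟨m, hm, fun k => ?_⟩
  by_cases hk : k ∈ c.S
  · rcases hval k (by rwa [hAS]) with h | h
    · exact Or.inr (Or.inl h)
    · exact Or.inr (Or.inr (Or.inl h))
  · left
    by_contra h
    exact hk (c.mem_S.2 h)

lemma CLS_card_pos : 0 < c.CLS.card := by
  obtain ⟨k, hk⟩ := c.S_nonempty
  exact Finset.card_pos.2 ⟨c.Cl k, c.Cl_mem_CLS hk⟩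

lemma good_J_empty (hJ : c.J = ∅) : c.Good := by
  obtain ⟨k, hk⟩ := c.S_nonempty
  have hC := c.Cl_mem_CLS hk
  have := c.class_eq_S hC (by rw [hJ]; simp)
  apply c.good_card_one
  have : ∀ B ∈ c.CLS, B = c.S := by
    intro B hB
    exact c.class_eq_S hB (by rw [hJ]; simp)
  rw [Finset.card_eq_one]
  refine ⟨c.S, ?_⟩
  ext B
  simp only [Finset.mem_singleton]
  constructor
  · intro hB; exact this B hB
  · rintro rfl
    have h2 := this _ hC
    rw [← h2]
    exact hC

lemma good_J_single (u : Fin n) (hJ : c.J = {u}) (hdeg : c.deg u = 4) : c.Good := by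
  have hJne : c.J.Nonempty := by rw [hJ]; simp
  have hsum : ∑ C ∈ c.CLS, c.jC C u = 4 := by
    have := c.sum_jC u
    omega
  have hcard2 : c.CLS.card ≤ 2 := by
    by_contra h
    push_neg at h
    have hle : ∀ C ∈ c.CLS, 2 ≤ c.jC C u := by
      intro C hC
      have := c.endJ_pos hC hJne
      rwa [hJ, Finset.sum_singleton] at this
    have : 2 * c.CLS.card ≤ ∑ C ∈ c.CLS, c.jC C u := by
      calc 2 * c.CLS.card = ∑ _C ∈ c.CLS, 2 := by simp [mul_comm]
      _ ≤ _ := Finset.sum_le_sum hle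
    omega
  have hpos := c.CLS_card_pos
  interval_cases h : c.CLS.card
  · exact c.good_card_one h
  · -- two classes
    obtain ⟨A, B, hAB, hCLS⟩ := Finset.card_eq_two.1 h
    have hA : A ∈ c.CLS := by rw [hCLS]; simp
    have hB : B ∈ c.CLS := by rw [hCLS]; simp
    have hjsum : c.jC A u + c.jC B u = 4 := by
      rw [hCLS, Finset.sum_pair hAB] at hsum
      omega
    have hjA : 2 ≤ c.jC A u := by
      have := c.endJ_pos hA hJne
      rwa [hJ, Finset.sum_singleton] at this
    have hjB : 2 ≤ c.jC B u := by
      have := c.endJ_pos hB hJne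
      rwa [hJ, Finset.sum_singleton] at this
    have hjA2 : c.jC A u = 2 := by omega
    have hjB2 : c.jC B u = 2 := by omega
    obtain ⟨mA, hmA, hvalA⟩ := c.CLS_val hA
    obtain ⟨mB, hmB, hvalB⟩ := c.CLS_val hB
    have hceq : c.cC A u + c.cC B u = 0 := by
      have := c.sum_cC u
      rw [hCLS, Finset.sum_pair hAB] at this
      omega
    have hcA : c.cC A u ≠ 0 := by
      intro h0
      have hAS := c.class_eq_S hA (by
        rw [hJ]
        intro l hl
        rw [Finset.mem_singleton.1 hl]
        exact h0)
      obtain ⟨b, hb⟩ := c.CLS_nonempty hB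
      have hbS : b ∈ c.S := c.CLS_sub hB hb
      rw [← hAS] at hbS
      have := c.CLS_disj hA hB (by
        intro hE
        rw [hE] at hAS
        rw [hAS] at hjB2
        have : c.jC c.S u = c.deg u := rfl
        omega)
      exact (Finset.disjoint_left.1 this) hbS hb
    have hc2A := c.cC_two hvalA hjA2
    have hc2B := c.cC_two hvalB hjB2
    have hmAB : mA = mB := by omega
    refine ⟨mB, hmB, fun k => ?_⟩
    by_cases hk : k ∈ c.S
    · have : k ∈ A ∨ k ∈ B := by
        have : k ∈ c.CLS.biUnion id := by rw [c.CLS_biUnion]; exact hk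
        rw [hCLS] at this
        simpa using this
      rcases this with h | h
      · rcases hvalA k h with h' | h' <;> rw [hmAB] at h' <;> omega
      · rcases hvalB k h with h' | h' <;> omega
    · left
      by_contra h
      exact hk (c.mem_S.2 h)

/-- Three ±-pairs with pairwise distinct "parity products" is impossible. -/
lemma sign3 {au aw bu bw cu cw ma mb mc : ℤ} (hma : 0 < ma) (hmb : 0 < mb) (hmc : 0 < mc)
    (h1 : au = ma ∨ au = -ma) (h2 : aw = ma ∨ aw = -ma)
    (h3 : bu = mb ∨ bu = -mb) (h4 : bw = mb ∨ bw = -mb)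
    (h5 : cu = mc ∨ cu = -mc) (h6 : cw = mc ∨ cw = -mc)
    (hab : au * bw ≠ aw * bu) (hac : au * cw ≠ aw * cu) (hbc : bu * cw ≠ bw * cu) :
    False := by
  rcases h1 with rfl | rfl <;> rcases h2 with rfl | rfl <;> rcases h3 with rfl | rfl <;>
    rcases h4 with rfl | rfl <;> rcases h5 with rfl | rfl <;> rcases h6 with rfl | rfl <;>
    · ring_nf at hab hac hbc <;> simp_all

lemma rel_symm {k k' : Fin q} (h : c.Rel k k') : c.Rel k' k := by
  obtain ⟨h1, h2, l, h3, h4, h5⟩ := h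
  exact ⟨h2, h1, l, h3, h5, h4⟩

lemma tsum (X Y : Finset (Fin q)) (hX : X ∈ c.CLS) (hY : Y ∈ c.CLS) (hXY : X ≠ Y)
    (tX tY : ℚ) (l : Fin n) :
    ∑ k ∈ c.S, (if k ∈ X then tX else if k ∈ Y then tY else 0) * (c.α k : ℚ) *
        (c.inc k l : ℚ) =
      tX * ((c.cC X l : ℤ) : ℚ) + tY * ((c.cC Y l : ℤ) : ℚ) := by
  classical
  have hdisj := c.CLS_disj hX hY hXY
  have hsub : X ∪ Y ⊆ c.S := Finset.union_subset (c.CLS_sub hX) (c.CLS_sub hY)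
  rw [← Finset.sum_subset hsub (by
    intro x _ hx
    simp only [Finset.mem_union] at hx
    push_neg at hx
    simp [hx.1, hx.2])]
  rw [Finset.sum_union hdisj]
  have e1 : ∑ k ∈ X, (if k ∈ X then tX else if k ∈ Y then tY else 0) * (c.α k : ℚ) *
      (c.inc k l : ℚ) = tX * ((c.cC X l : ℤ) : ℚ) := by
    rw [show ((c.cC X l : ℤ) : ℚ) = ∑ k ∈ X, (c.α k : ℚ) * (c.inc k l : ℚ) by
      simp only [cC]; push_cast; rfl]
    rw [Finset.mul_sum]
    exact Finset.sum_congr rfl (fun k hk => by simp [hk]; ring)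
  have e2 : ∑ k ∈ Y, (if k ∈ X then tX else if k ∈ Y then tY else 0) * (c.α k : ℚ) *
      (c.inc k l : ℚ) = tY * ((c.cC Y l : ℤ) : ℚ) := by
    rw [show ((c.cC Y l : ℤ) : ℚ) = ∑ k ∈ Y, (c.α k : ℚ) * (c.inc k l : ℚ) by
      simp only [cC]; push_cast; rfl]
    rw [Finset.mul_sum]
    refine Finset.sum_congr rfl (fun k hk => ?_)
    have hkX : k ∉ X := Finset.disjoint_right.1 hdisj hk
    simp [hkX, hk]
    ring
  rw [e1, e2]

lemma theta_pair (u w : Fin n) (huw : u ≠ w) (hJ : c.J = {u, w})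
    (X Y Z : Finset (Fin q)) (hX : X ∈ c.CLS) (hY : Y ∈ c.CLS) (hZ : Z ∈ c.CLS)
    (hXY : X ≠ Y) (hXZ : X ≠ Z) (hYZ : Y ≠ Z)
    (hYu : c.cC Y u ≠ 0) (hZu : c.cC Z u ≠ 0)
    (hdet : c.cC Y u * c.cC Z w = c.cC Y w * c.cC Z u) : False := by
  classical
  obtain ⟨k1, hk1⟩ := c.CLS_nonempty hY
  obtain ⟨k0, hk0⟩ := c.CLS_nonempty hX
  have hk0Y : k0 ∉ Y := Finset.disjoint_left.1 (c.CLS_disj hX hY hXY) hk0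
  have hk0Z : k0 ∉ Z := Finset.disjoint_left.1 (c.CLS_disj hX hZ hXZ) hk0
  apply c.KS (fun k => if k ∈ Y then ((c.cC Z u : ℤ) : ℚ) else if k ∈ Z then
      (-(c.cC Y u : ℤ) : ℚ) else 0)
    ?_ ?_ ?_ k1 (c.CLS_sub hY hk1) (by simp [hk1]; exact_mod_cast hZu)
    k0 (c.CLS_sub hX hk0) (by simp [hk0Y, hk0Z])
  · intro k hk
    have h1 : k ∉ Y := fun h => hk (c.CLS_sub hY h)
    have h2 : k ∉ Z := fun h => hk (c.CLS_sub hZ h)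
    simp [h1, h2]
  · intro k k' hr
    by_cases h1 : k ∈ Y
    · have := c.CLS_closed hY h1 hr
      simp [h1, this]
    · by_cases h2 : k ∈ Z
      · have h2' := c.CLS_closed hZ h2 hr
        have h1' : k' ∉ Y := Finset.disjoint_right.1 (c.CLS_disj hY hZ hYZ) h2'
        simp [h1, h2, h1', h2']
      · have h1' : k' ∉ Y := fun h => h1 (c.CLS_closed hY h (c.rel_symm hr))
        have h2' : k' ∉ Z := fun h => h2 (c.CLS_closed hZ h (c.rel_symm hr))
        simp [h1, h2, h1', h2']
  · intro l hl
    rw [c.tsum Y Z hY hZ hYZ _ _ l]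
    rw [hJ] at hl
    rcases Finset.mem_insert.1 hl with rfl | hl
    · push_cast
      ring
    · rw [Finset.mem_singleton.1 hl]
      have : (c.cC Y u : ℚ) * (c.cC Z w : ℚ) = (c.cC Y w : ℚ) * (c.cC Z u : ℚ) := by
        exact_mod_cast congrArg (fun x : ℤ => (x : ℚ)) hdet
      push_cast
      linear_combination -this

lemma theta_false (u w : Fin n) (huw : u ≠ w) (hJ : c.J = {u, w})
    (X Y Z : Finset (Fin q)) (hX : X ∈ c.CLS) (hY : Y ∈ c.CLS) (hZ : Z ∈ c.CLS)
    (hXY : X ≠ Y) (hXZ : X ≠ Z) (hYZ : Y ≠ Z)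
    (hXu : c.jC X u = 1) (hXw : c.jC X w = 1) (hYu : c.jC Y u = 1) (hYw : c.jC Y w = 1)
    (hZu : c.jC Z u = 1) (hZw : c.jC Z w = 1) : False := by
  obtain ⟨mX, hmX, hvX⟩ := c.CLS_val hX
  obtain ⟨mY, hmY, hvY⟩ := c.CLS_val hY
  obtain ⟨mZ, hmZ, hvZ⟩ := c.CLS_val hZ
  have cXu := c.cC_one hvX hXu
  have cXw := c.cC_one hvX hXw
  have cYu := c.cC_one hvY hYu
  have cYw := c.cC_one hvY hYw
  have cZu := c.cC_one hvZ hZu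
  have cZw := c.cC_one hvZ hZw
  have hXu0 : c.cC X u ≠ 0 := by omega
  have hYu0 : c.cC Y u ≠ 0 := by omega
  have hZu0 : c.cC Z u ≠ 0 := by omega
  have hdXY : c.cC X u * c.cC Y w ≠ c.cC X w * c.cC Y u := fun h =>
    c.theta_pair u w huw hJ Z X Y hZ hX hY (Ne.symm hXZ) (Ne.symm hYZ) hXY hXu0 hYu0 h
  have hdXZ : c.cC X u * c.cC Z w ≠ c.cC X w * c.cC Z u := fun h =>
    c.theta_pair u w huw hJ Y X Z hY hX hZ (Ne.symm hXY) hYZ hXZ hXu0 hZu0 h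
  have hdYZ : c.cC Y u * c.cC Z w ≠ c.cC Y w * c.cC Z u := fun h =>
    c.theta_pair u w huw hJ X Y Z hX hY hZ hXY hXZ hYZ hYu0 hZu0 h
  exact sign3 hmX hmY hmZ cXu cXw cYu cYw cZu cZw hdXY hdXZ hdYZ

lemma case210 (u w : Fin n)
    (X Y Z : Finset (Fin q)) (hX : X ∈ c.CLS) (hY : Y ∈ c.CLS) (hZ : Z ∈ c.CLS)
    (hmem : ∀ k ∈ c.S, k ∈ X ∨ k ∈ Y ∨ k ∈ Z)
    (hcu : c.cC X u + c.cC Y u + c.cC Z u = 0)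
    (hcw : c.cC X w + c.cC Y w + c.cC Z w = 0)
    (hXu : c.jC X u = 2) (hXw : c.jC X w = 0)
    (hYu : c.jC Y u = 1) (hYw : c.jC Y w = 1)
    (hZu : c.jC Z u = 0) (hZw : c.jC Z w = 2) : c.Good := by
  obtain ⟨mX, hmX, hvX⟩ := c.CLS_val hX
  obtain ⟨mY, hmY, hvY⟩ := c.CLS_val hY
  obtain ⟨mZ, hmZ, hvZ⟩ := c.CLS_val hZ
  have cYu := c.cC_one hvY hYu
  have cYw := c.cC_one hvY hYw
  have cXu := c.cC_two hvX hXu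
  have cZw := c.cC_two hvZ hZw
  have cZu0 : c.cC Z u = 0 := c.jC_zero hZu
  have cXw0 : c.cC X w = 0 := c.jC_zero hXw
  have hYeq : mY = 2 * mX := by omega
  have hZeq : mZ = mX := by omega
  refine ⟨mX, hmX, fun k => ?_⟩
  by_cases hk : k ∈ c.S
  · rcases hmem k hk with h | h | h
    · rcases hvX k h with h' | h' <;> omega
    · rcases hvY k h with h' | h' <;> omega
    · rcases hvZ k h with h' | h' <;> omega
  · left
    by_contra h
    exact hk (c.mem_S.2 h)

lemma pair_case (u w : Fin n)
    (A B : Finset (Fin q)) (hA : A ∈ c.CLS) (hB : B ∈ c.CLS)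
    (hmem : ∀ k ∈ c.S, k ∈ A ∨ k ∈ B)
    (hcu : c.cC A u + c.cC B u = 0)
    (hAu : c.jC A u = 1) (hBu : c.jC B u = 2) : c.Good := by
  obtain ⟨mA, hmA, hvA⟩ := c.CLS_val hA
  obtain ⟨mB, hmB, hvB⟩ := c.CLS_val hB
  have cAu := c.cC_one hvA hAu
  have cBu := c.cC_two hvB hBu
  have hAeq : mA = 2 * mB := by omega
  refine ⟨mB, hmB, fun k => ?_⟩
  by_cases hk : k ∈ c.S
  · rcases hmem k hk with h | h
    · rcases hvA k h with h' | h' <;> omega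
    · rcases hvB k h with h' | h' <;> omega
  · left
    by_contra h
    exact hk (c.mem_S.2 h)

end Ctx

/-- Incidence pattern enumeration for three classes at two degree-3 junctions. -/
lemma pat6 {a b c d e f : ℕ} (h1 : a + (b + c) = 3) (h2 : d + (e + f) = 3)
    (p1 : 2 ≤ a + d) (p2 : 2 ≤ b + e) (p3 : 2 ≤ c + f)
    (q1 : 2 ∣ (a + d)) (q2 : 2 ∣ (b + e)) (q3 : 2 ∣ (c + f)) :
    (a = 1 ∧ d = 1 ∧ b = 1 ∧ e = 1 ∧ c = 1 ∧ f = 1) ∨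
    (a = 2 ∧ d = 0 ∧ b = 1 ∧ e = 1 ∧ c = 0 ∧ f = 2) ∨
    (a = 2 ∧ d = 0 ∧ c = 1 ∧ f = 1 ∧ b = 0 ∧ e = 2) ∨
    (b = 2 ∧ e = 0 ∧ a = 1 ∧ d = 1 ∧ c = 0 ∧ f = 2) ∨
    (b = 2 ∧ e = 0 ∧ c = 1 ∧ f = 1 ∧ a = 0 ∧ d = 2) ∨
    (c = 2 ∧ f = 0 ∧ a = 1 ∧ d = 1 ∧ b = 0 ∧ e = 2) ∨
    (c = 2 ∧ f = 0 ∧ b = 1 ∧ e = 1 ∧ a = 0 ∧ d = 2) := by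
  have e1 : a + d = 2 := by omega
  have e2 : b + e = 2 := by omega
  have e3 : c + f = 2 := by omega
  clear p1 p2 p3 q1 q2 q3 h2
  have ha : a ≤ 2 := by omega
  have hb : b ≤ 2 := by omega
  have hc : c ≤ 2 := by omega
  interval_cases a <;> interval_cases b <;> interval_cases c <;>
    first
      | (exfalso; omega)
      | (left; omega)
      | (right; left; omega)
      | (right; right; left; omega)
      | (right; right; right; left; omega)
      | (right; right; right; right; left; omega)
      | (right; right; right; right; right; left; omega)
      | (right; right; right; right; right; right; omega)

/-- Incidence pattern enumeration for two classes at two degree-3 junctions. -/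
lemma pat4 {a b d e : ℕ} (h1 : a + b = 3) (h2 : d + e = 3)
    (p1 : 2 ≤ a + d) (p2 : 2 ≤ b + e) (q1 : 2 ∣ (a + d)) (q2 : 2 ∣ (b + e)) :
    (a = 1 ∧ b = 2) ∨ (b = 1 ∧ a = 2) ∨ (a = 0 ∧ b = 3) ∨ (b = 0 ∧ a = 3) ∨
    (d = 0 ∧ e = 3) ∨ (e = 0 ∧ d = 3) := by
  have ha : a ≤ 3 := by omega
  have hd : d ≤ 3 := by omega
  interval_cases a <;> interval_cases d <;>
    first
      | (exfalso; omega)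
      | (left; omega)
      | (right; left; omega)
      | (right; right; left; omega)
      | (right; right; right; left; omega)
      | (right; right; right; right; left; omega)
      | (right; right; right; right; right; omega)

namespace Ctx

variable {n q : ℕ} (c : Ctx n q)

lemma good_card3 (u w : Fin n) (huw : u ≠ w) (hJ : c.J = {u, w})
    (hsumu : ∑ C ∈ c.CLS, c.jC C u = 3) (hsumw : ∑ C ∈ c.CLS, c.jC C w = 3)
    (h3 : c.CLS.card = 3) : c.Good := by
  have hJne : c.J.Nonempty := by rw [hJ]; simp
  obtain ⟨A, B, C, hAB, hAC, hBC, hCLS⟩ := Finset.card_eq_three.1 h3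
  have hA : A ∈ c.CLS := by rw [hCLS]; simp
  have hB : B ∈ c.CLS := by rw [hCLS]; simp
  have hC : C ∈ c.CLS := by rw [hCLS]; simp
  have hmem : ∀ k ∈ c.S, k ∈ A ∨ k ∈ B ∨ k ∈ C := by
    intro k hk
    have : k ∈ c.CLS.biUnion id := by rw [c.CLS_biUnion]; exact hk
    rw [hCLS] at this
    simpa using this
  have hnotin : A ∉ ({B, C} : Finset (Finset (Fin q))) := by simp [hAB, hAC]
  rw [hCLS, Finset.sum_insert hnotin, Finset.sum_pair hBC] at hsumu hsumw
  have hcu : c.cC A u + (c.cC B u + c.cC C u) = 0 := by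
    have h0 := c.sum_cC u
    rw [hCLS, Finset.sum_insert hnotin, Finset.sum_pair hBC] at h0
    exact h0
  have hcw : c.cC A w + (c.cC B w + c.cC C w) = 0 := by
    have h0 := c.sum_cC w
    rw [hCLS, Finset.sum_insert hnotin, Finset.sum_pair hBC] at h0
    exact h0
  have hend : ∀ D ∈ c.CLS, 2 ≤ c.jC D u + c.jC D w ∧ 2 ∣ (c.jC D u + c.jC D w) := by
    intro D hD
    have h1 := c.endJ_pos hD hJne
    have h2 := c.endJ_even hD
    rw [hJ, Finset.sum_pair huw] at h1 h2
    exact ⟨h1, h2⟩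
  obtain ⟨heA1, heA2⟩ := hend A hA
  obtain ⟨heB1, heB2⟩ := hend B hB
  obtain ⟨heC1, heC2⟩ := hend C hC
  have hpat := pat6 hsumu hsumw heA1 heB1 heC1 heA2 heB2 heC2
  rcases hpat with ⟨h1, h2, h3', h4, h5, h6⟩ | ⟨h1, h2, h3', h4, h5, h6⟩ |
    ⟨h1, h2, h3', h4, h5, h6⟩ | ⟨h1, h2, h3', h4, h5, h6⟩ | ⟨h1, h2, h3', h4, h5, h6⟩ |
    ⟨h1, h2, h3', h4, h5, h6⟩ | ⟨h1, h2, h3', h4, h5, h6⟩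
  · exact (c.theta_false u w huw hJ A B C hA hB hC hAB hAC hBC
      h1 h2 h3' h4 h5 h6).elim
  · exact c.case210 u w A B C hA hB hC hmem (by linarith) (by linarith) h1 h2 h3' h4 h5 h6
  · exact c.case210 u w A C B hA hC hB (fun k hk => by have := hmem k hk; tauto)
      (by linarith) (by linarith) h1 h2 h3' h4 h5 h6
  · exact c.case210 u w B A C hB hA hC (fun k hk => by have := hmem k hk; tauto)
      (by linarith) (by linarith) h1 h2 h3' h4 h5 h6
  · exact c.case210 u w B C A hB hC hA (fun k hk => by have := hmem k hk; tauto)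
      (by linarith) (by linarith) h1 h2 h3' h4 h5 h6
  · exact c.case210 u w C A B hC hA hB (fun k hk => by have := hmem k hk; tauto)
      (by linarith) (by linarith) h1 h2 h3' h4 h5 h6
  · exact c.case210 u w C B A hC hB hA (fun k hk => by have := hmem k hk; tauto)
      (by linarith) (by linarith) h1 h2 h3' h4 h5 h6

lemma good_J_pair (u w : Fin n) (huw : u ≠ w) (hJ : c.J = {u, w})
    (hdu : c.deg u = 3) (hdw : c.deg w = 3) : c.Good := by
  have hJne : c.J.Nonempty := by rw [hJ]; simp
  have hsumu : ∑ C ∈ c.CLS, c.jC C u = 3 := by rw [c.sum_jC u, hdu]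
  have hsumw : ∑ C ∈ c.CLS, c.jC C w = 3 := by rw [c.sum_jC w, hdw]
  have hend : ∀ C ∈ c.CLS, 2 ≤ c.jC C u + c.jC C w := by
    intro C hC
    have h1 := c.endJ_pos hC hJne
    rwa [hJ, Finset.sum_pair huw] at h1
  have hcard3 : c.CLS.card ≤ 3 := by
    by_contra h
    push_neg at h
    have h2 : 2 * c.CLS.card ≤ ∑ C ∈ c.CLS, (c.jC C u + c.jC C w) := by
      calc 2 * c.CLS.card = ∑ _C ∈ c.CLS, 2 := by simp [mul_comm]
      _ ≤ _ := Finset.sum_le_sum hend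
    rw [Finset.sum_add_distrib, hsumu, hsumw] at h2
    omega
  have hpos := c.CLS_card_pos
  have hcases : c.CLS.card = 1 ∨ c.CLS.card = 2 ∨ c.CLS.card = 3 := by omega
  rcases hcases with h | h | h
  · exact c.good_card_one h
  · -- two classes
    obtain ⟨A, B, hAB, hCLS⟩ := Finset.card_eq_two.1 h
    have hA : A ∈ c.CLS := by rw [hCLS]; simp
    have hB : B ∈ c.CLS := by rw [hCLS]; simp
    obtain ⟨mA, hmA, hvA⟩ := c.CLS_val hA
    obtain ⟨mB, hmB, hvB⟩ := c.CLS_val hB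
    have hmem : ∀ k ∈ c.S, k ∈ A ∨ k ∈ B := by
      intro k hk
      have : k ∈ c.CLS.biUnion id := by rw [c.CLS_biUnion]; exact hk
      rw [hCLS] at this
      simpa using this
    rw [hCLS, Finset.sum_pair hAB] at hsumu hsumw
    have hcu : c.cC A u + c.cC B u = 0 := by
      have h0 := c.sum_cC u; rw [hCLS, Finset.sum_pair hAB] at h0; exact h0
    have hcw : c.cC A w + c.cC B w = 0 := by
      have h0 := c.sum_cC w; rw [hCLS, Finset.sum_pair hAB] at h0; exact h0
    have heA1 := hend A hA
    have heB1 := hend B hB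
    have heA2 : 2 ∣ (c.jC A u + c.jC A w) := by
      have h2 := c.endJ_even hA
      rwa [hJ, Finset.sum_pair huw] at h2
    have heB2 : 2 ∣ (c.jC B u + c.jC B w) := by
      have h2 := c.endJ_even hB
      rwa [hJ, Finset.sum_pair huw] at h2
    rcases pat4 hsumu hsumw heA1 heB1 heA2 heB2 with
      ⟨h1, h2⟩ | ⟨h1, h2⟩ | ⟨h1, h2⟩ | ⟨h1, h2⟩ | ⟨h1, h2⟩ | ⟨h1, h2⟩
    · exact c.pair_case u w A B hA hB hmem hcu h1 h2
    · exact c.pair_case u w B A hB hA (fun k hk => (hmem k hk).symm) (by linarith) h1 h2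
    · have hodd := c.cC_odd hmB hvB (Or.inr h2)
      have hz := c.jC_zero h1
      exact (hodd (by linarith)).elim
    · have hodd := c.cC_odd hmA hvA (Or.inr h2)
      have hz := c.jC_zero h1
      exact (hodd (by linarith)).elim
    · have hodd := c.cC_odd (l := w) hmB hvB (Or.inr h2)
      have hz := c.jC_zero h1
      exact (hodd (by linarith)).elim
    · have hodd := c.cC_odd (l := w) hmA hvA (Or.inr h2)
      have hz := c.jC_zero h1
      exact (hodd (by linarith)).elim
  · exact c.good_card3 u w huw hJ hsumu hsumw h

lemma good : c.Good := by
  rcases c.junction_cases with h | ⟨u, hu, hdeg⟩ | ⟨u, w, huw, huvw, hdu, hdw⟩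
  · exact c.good_J_empty h
  · exact c.good_J_single u hu hdeg
  · exact c.good_J_pair u w huw huvw hdu hdw

end Ctx

end CircuitAux

/-- For the configuration of characteristic vectors of the edges of a multigraph `G`
(edge `k` has endpoints `e₁ k`, `e₂ k`; loops have `e₁ k = e₂ k`), every circuit
`T^a - T^b` of the toric ideal has a square-free term, or it has non-square-free terms
and `max_i a_i = max_i b_i = 2`. -/
theorem circuit_of_multigraph_sqFree_or_balanced_two {n q : ℕ}
    (e₁ e₂ : Fin q → Fin n) (v : Fin q → Fin n → ℤ)
    (hv : ∀ k l, v k l = (if e₁ k = l then 1 else 0) + (if e₂ k = l then 1 else 0))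
    (α : Fin q → ℤ) (hα : IsCircuitVec v α) :
    SqFreePair (posExp α) (negExp α) ∨
      (¬ SqFreePair (posExp α) (negExp α) ∧
        Finset.univ.sup (posExp α) = 2 ∧ Finset.univ.sup (negExp α) = 2) := by
  obtain ⟨hne, hker, hmin, hgcd⟩ := hα
  have hkerC : ∀ l, ∑ k, α k *
      ((if e₁ k = l then (1:ℤ) else 0) + (if e₂ k = l then 1 else 0)) = 0 := by
    intro l
    have h0 := congrFun hker l
    rw [Finset.sum_apply] at h0
    calc ∑ k, α k * ((if e₁ k = l then (1:ℤ) else 0) + (if e₂ k = l then 1 else 0))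
        = ∑ k, (α k • v k) l := by
          apply Finset.sum_congr rfl
          intro k _
          rw [Pi.smul_apply, smul_eq_mul, hv k l]
      _ = 0 := h0
  have hminC : ∀ β : Fin q → ℚ,
      (∀ l, ∑ k, β k * ((if e₁ k = l then (1:ℚ) else 0) + (if e₂ k = l then 1 else 0)) = 0) →
      β ≠ 0 → Function.support β ⊆ Function.support α →
      Function.support β = Function.support α := by
    intro β hb hbne hsub
    apply hmin β _ hbne hsub
    funext l
    rw [Finset.sum_apply]
    calc ∑ k, (β k • fun l' => ((v k l' : ℤ) : ℚ)) l
        = ∑ k, β k * ((if e₁ k = l then (1:ℚ) else 0) + (if e₂ k = l then 1 else 0)) := by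
          apply Finset.sum_congr rfl
          intro k _
          rw [Pi.smul_apply, smul_eq_mul, hv k l]
          push_cast
          split <;> split <;> norm_num
      _ = 0 := hb l
  obtain ⟨m, hm, hval0⟩ := (Ctx.mk e₁ e₂ α hne hkerC hminC).good
  have hval : ∀ k, α k = 0 ∨ α k = m ∨ α k = -m ∨ α k = 2*m ∨ α k = -(2*m) := hval0
  have hmdvd : m ∣ Finset.univ.gcd α := by
    apply Finset.dvd_gcd
    intro k _
    rcases hval k with h | h | h | h | h
    · exact ⟨0, by omega⟩
    · exact ⟨1, by omega⟩
    · exact ⟨-1, by omega⟩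
    · exact ⟨2, by omega⟩
    · exact ⟨-2, by omega⟩
  rw [hgcd] at hmdvd
  have hm1 : m = 1 := by
    have := Int.le_of_dvd one_pos hmdvd
    omega
  have habs : ∀ k, α k ≤ 2 ∧ -2 ≤ α k := by
    intro k
    rcases hval k with h | h | h | h | h <;> omega
  have hpos2 : ∀ i, posExp α i ≤ 2 := by
    intro i
    have := habs i
    simp only [posExp]
    omega
  have hneg2 : ∀ i, negExp α i ≤ 2 := by
    intro i
    have := habs i
    simp only [negExp]
    omega
  by_cases hsq : SqFreePair (posExp α) (negExp α)
  · exact Or.inl hsq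
  · refine Or.inr ⟨hsq, ?_, ?_⟩
    · have hex : ∃ i, 2 ≤ posExp α i := by
        unfold SqFreePair at hsq
        push_neg at hsq
        obtain ⟨i, hi⟩ := hsq.1
        exact ⟨i, by omega⟩
      obtain ⟨i, hi⟩ := hex
      refine le_antisymm (Finset.sup_le (fun j _ => hpos2 j)) ?_
      exact le_trans hi (Finset.le_sup (Finset.mem_univ i))
    · have hex : ∃ i, 2 ≤ negExp α i := by
        unfold SqFreePair at hsq
        push_neg at hsq
        obtain ⟨i, hi⟩ := hsq.2
        exact ⟨i, by omega⟩
      obtain ⟨i, hi⟩ := hex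
      refine le_antisymm (Finset.sup_le (fun j _ => hneg2 j)) ?_
      exact le_trans hi (Finset.le_sup (Finset.mem_univ i))
end

section
/- Let A = (v_1, …, v_q) ⊂ ℤ^n be a homogeneous normal configuration, and suppose g = T_1^{b_1}⋯T_r^{b_r} − T_{r+1}^{b_{r+1}}⋯T_s^{b_s} is a binomial in the toric ideal I_A with all b_i ≥ 1, with max{b_1,…,b_r} < max{b_{r+1},…,b_s}, and with b_k = max{b_{r+1},…,b_s} for some k ∈ {r+1,…,s}. Then there exists γ ∈ ℕ^q such that the binomial T_1 T_2 ⋯ T_r − T_k·T^γ lies in I_A; in particular, g has a connector. -/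
open MvPolynomial

section Aux

open Finsupp

noncomputable def phiMap (K : Type*) [Field K] {n q : ℕ} (v : Fin q → Fin n → ℤ) :
    MvPolynomial (Fin q) K →ₐ[K] AddMonoidAlgebra K (Fin n → ℤ) :=
  MvPolynomial.aeval (fun i => AddMonoidAlgebra.single (v i) 1)

lemma phiMap_monomial (K : Type*) [Field K] {n q : ℕ} (v : Fin q → Fin n → ℤ)
    (a : Fin q → ℕ) :
    phiMap K v (monomial (Finsupp.equivFunOnFinite.symm a) 1) =
      AddMonoidAlgebra.single (∑ i, a i • v i) 1 := by
  rw [phiMap, aeval_monomial, map_one, one_mul]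
  rw [Finsupp.prod_fintype]
  · simp_rw [AddMonoidAlgebra.single_pow, one_pow, Finsupp.coe_equivFunOnFinite_symm]
    rw [AddMonoidAlgebra.prod_single]
    simp
  · intro i; simp

lemma sum_eq_of_binom_mem (K : Type*) [Field K] {n q : ℕ} (v : Fin q → Fin n → ℤ)
    (a c : Fin q → ℕ) (h : binom K a c ∈ toricIdeal K v) :
    (∑ i, a i • v i) = ∑ i, c i • v i := by
  have hker : toricIdeal K v ≤ RingHom.ker (phiMap K v).toRingHom := by
    rw [toricIdeal, Ideal.span_le]
    rintro f ⟨a', b', hab, rfl⟩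
    simp only [SetLike.mem_coe, RingHom.mem_ker, AlgHom.toRingHom_eq_coe, RingHom.coe_coe]
    rw [binom, map_sub, phiMap_monomial, phiMap_monomial, hab, sub_self]
  have h0 := hker h
  simp only [SetLike.mem_coe, RingHom.mem_ker, AlgHom.toRingHom_eq_coe, RingHom.coe_coe] at h0
  rw [binom, map_sub, phiMap_monomial, phiMap_monomial, sub_eq_zero] at h0
  exact AddMonoidAlgebra.single_left_injective one_ne_zero h0

lemma exists_coeffs_of_mem_closure {n q : ℕ} (v : Fin q → Fin n → ℤ) {x : Fin n → ℤ}
    (hx : x ∈ AddSubmonoid.closure (Set.range v)) :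
    ∃ γ : Fin q → ℕ, x = ∑ i, γ i • v i := by
  induction hx using AddSubmonoid.closure_induction with
  | mem y hy =>
    obtain ⟨i, rfl⟩ := hy
    exact ⟨fun j => if j = i then 1 else 0, by simp [ite_smul, Finset.sum_ite_eq']⟩
  | zero => exact ⟨0, by simp⟩
  | add y z hy hz ihy ihz =>
    obtain ⟨γ, rfl⟩ := ihy
    obtain ⟨δ, rfl⟩ := ihz
    exact ⟨γ + δ, by simp [add_smul, Finset.sum_add_distrib]⟩

end Aux

/-- Let `v` be a homogeneous normal configuration and let `g = T^a - T^c` be a binomial of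
the toric ideal (with disjoint supports of `a` and `c`) whose first term has strictly
smaller maximal exponent, the maximum of `c` being attained at `k`.  Then there is
`γ ∈ ℕ^q` with `∏_{i ∈ supp a} T_i - T_k T^γ` in the toric ideal; in particular `g`
has a connector. -/
theorem exists_connector_of_unbalanced (K : Type*) [Field K] {n q : ℕ}
    (hn : 0 < n) (hq : 0 < q) (v : Fin q → Fin n → ℤ)
    (hhom : IsHomogeneousConfig v) (hnorm : IsNormalConfig v)
    (a c : Fin q → ℕ) (hdisj : ∀ i, a i = 0 ∨ c i = 0)
    (hmem : binom K a c ∈ toricIdeal K v)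
    (hunbal : Finset.univ.sup a < Finset.univ.sup c)
    (k : Fin q) (hk : c k = Finset.univ.sup c) :
    ∃ γ : Fin q → ℕ,
      binom K (fun i => min (a i) 1) (fun i => γ i + if i = k then 1 else 0) ∈
          toricIdeal K v ∧
        IsConnector K v a c
          (binom K (fun i => min (a i) 1) (fun i => γ i + if i = k then 1 else 0)) := by
  classical
  have hck : 0 < c k := by
    rw [hk]; exact lt_of_le_of_lt (Nat.zero_le _) hunbal
  have hrel : (∑ i, a i • v i) = ∑ i, c i • v i := sum_eq_of_binom_mem K v a c hmem
  set b : Fin q → ℕ := fun i => min (a i) 1 with hb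
  set x : Fin n → ℤ := (∑ i, b i • v i) - v k with hxdef
  have hgrp : x ∈ AddSubgroup.closure (Set.range v) := by
    apply sub_mem
    · exact AddSubgroup.sum_mem _
        (fun i _ => AddSubgroup.nsmul_mem _ (AddSubgroup.subset_closure (Set.mem_range_self i)) _)
    · exact AddSubgroup.subset_closure (Set.mem_range_self k)
  have hrelR : ∀ l, (∑ i, (a i : ℝ) * v i l) = ∑ i, (c i : ℝ) * v i l := by
    intro l
    have h1 := congrFun hrel l
    simp only [Finset.sum_apply, Pi.smul_apply, nsmul_eq_mul] at h1
    exact_mod_cast h1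
  have hkR : (0:ℝ) < (c k : ℝ) := by exact_mod_cast hck
  set d : Fin q → ℝ :=
    fun i => ((if i = k then 0 else (c i : ℝ)) + (c k : ℝ) * b i - a i) / c k with hd
  have hd0 : ∀ i, 0 ≤ d i := by
    intro i
    apply div_nonneg _ hkR.le
    rcases Nat.eq_zero_or_pos (a i) with ha | ha
    · simp only [ha, Nat.cast_zero, sub_zero]
      have : (0:ℝ) ≤ (if i = k then 0 else (c i : ℝ)) := by positivity
      have hb0 : (0:ℝ) ≤ (c k : ℝ) * b i := by positivity
      linarith
    · have hc0 : c i = 0 := by rcases hdisj i with h | h <;> omega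
      have hik : i ≠ k := by intro h; rw [h] at hc0; omega
      have hbi : b i = 1 := by simp [hb]; omega
      have hai : a i ≤ Finset.univ.sup a := Finset.le_sup (Finset.mem_univ i)
      have hai' : a i < c k := by omega
      have : (a i : ℝ) ≤ (c k : ℝ) := by exact_mod_cast hai'.le
      rw [if_neg hik, hc0, hbi]
      push_cast
      linarith
  have hdx : ∀ l, ((x l : ℤ) : ℝ) = ∑ i, d i * (v i l : ℝ) := by
    intro l
    have hxl : ((x l : ℤ) : ℝ) = (∑ i, (b i : ℝ) * v i l) - v k l := by
      have h2 : x l = (∑ i, (b i : ℤ) * v i l) - v k l := by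
        simp [hxdef, Finset.sum_apply, nsmul_eq_mul]
      rw [h2]; push_cast; ring
    have hterm : ∀ i ∈ Finset.univ, d i * (v i l : ℝ) =
        ((if i = k then 0 else (c i : ℝ)) * v i l
          + (c k : ℝ) * ((b i : ℝ) * v i l) - (a i : ℝ) * v i l) / c k := by
      intro i _
      rw [hd]; ring
    rw [Finset.sum_congr rfl hterm, ← Finset.sum_div, Finset.sum_sub_distrib,
      Finset.sum_add_distrib]
    have hA : ∑ i, (if i = k then (0:ℝ) else (c i : ℝ)) * v i l =
        (∑ i, (c i : ℝ) * v i l) - (c k : ℝ) * v k l := by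
      have : ∀ i ∈ Finset.univ, (if i = k then (0:ℝ) else (c i : ℝ)) * v i l =
          (c i : ℝ) * v i l - (if i = k then (c k : ℝ) * v k l else 0) := by
        intro i _
        rcases eq_or_ne i k with h | h
        · subst h; simp
        · simp [h]
      rw [Finset.sum_congr rfl this, Finset.sum_sub_distrib, Finset.sum_ite_eq' Finset.univ k]
      simp
    rw [hA, ← Finset.mul_sum, hxl, eq_div_iff hkR.ne']
    linear_combination (hrelR l)
  have hcone : x ∈ AddSubmonoid.closure (Set.range v) :=
    (hnorm x).2 ⟨hgrp, d, hd0, hdx⟩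
  obtain ⟨γ, hγ⟩ := exists_coeffs_of_mem_closure v hcone
  have hsum : (∑ i, b i • v i) = ∑ i, (γ i + if i = k then 1 else 0) • v i := by
    have h1 : ∑ i, (γ i + if i = k then 1 else 0) • v i = (∑ i, γ i • v i) + v k := by
      simp [add_smul, Finset.sum_add_distrib, ite_smul, Finset.sum_ite_eq']
    rw [h1, ← hγ, hxdef]
    abel
  have hmem2 : binom K b (fun i => γ i + if i = k then 1 else 0) ∈ toricIdeal K v :=
    Ideal.subset_span ⟨b, fun i => γ i + if i = k then 1 else 0, hsum, rfl⟩
  refine ⟨γ, hmem2, b, fun i => γ i + if i = k then 1 else 0, rfl, hmem2,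
    fun i => min_le_right _ _, ?_, ⟨k, by simp, by omega⟩⟩
  intro i hi hia
  apply hi
  simp [hb, hia]
end

section
/- Let A = (v_1, …, v_q) ⊂ ℤ^n be a configuration and let V ⊂ ℚ^q be the kernel of the matrix with columns v_1, …, v_q. Then the circuits of A generate the abelian group V ∩ ℤ^q; that is, every integer vector in V is an integer linear combination of circuits of A. -/
open MvPolynomial

lemma bezout_finset {ι : Type*} [DecidableEq ι] (s : Finset ι) (f : ι → ℤ) :
    ∃ u : ι → ℤ, ∑ i ∈ s, u i * f i = s.gcd f := by
  classical
  induction s using Finset.induction_on with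
  | empty => exact ⟨0, by simp⟩
  | @insert a s ha ih =>
    obtain ⟨u, hu⟩ := ih
    set A := Int.gcdA (f a) (s.gcd f) with hA
    set B := Int.gcdB (f a) (s.gcd f) with hB
    refine ⟨fun i => if i = a then A else u i * B, ?_⟩
    have hgg : GCDMonoid.gcd (f a) (s.gcd f) = (Int.gcd (f a) (s.gcd f) : ℤ) := by
      simp [Int.coe_gcd]
    have hsum : ∑ i ∈ s, (if i = a then A else u i * B) * f i
        = (∑ i ∈ s, u i * f i) * B := by
      rw [Finset.sum_mul]
      refine Finset.sum_congr rfl fun i hi => ?_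
      rw [if_neg (fun h : i = a => ha (h ▸ hi))]; ring
    rw [Finset.sum_insert ha, Finset.gcd_insert, hgg, Int.gcd_eq_gcd_ab, hsum, hu]
    have : (fun i => if i = a then A else u i * B) a = A := by simp
    rw [this]
    ring

lemma exists_circuit {n q : ℕ} (v : Fin q → Fin n → ℤ) (x : Fin q → ℤ)
    (hx : (∑ i, x i • v i) = 0) (hx0 : x ≠ 0) :
    ∃ α : Fin q → ℤ, IsCircuitVec v α ∧ ∀ i, α i ≠ 0 → x i ≠ 0 := by
  classical
  -- the claim, by strong induction on support size
  suffices H : ∀ k : ℕ, ∀ β : Fin q → ℚ,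
      (∑ i, β i • (fun l => (v i l : ℚ))) = 0 → β ≠ 0 →
      (∀ i, β i ≠ 0 → x i ≠ 0) →
      (Finset.univ.filter (fun i => β i ≠ 0)).card ≤ k →
      ∃ α : Fin q → ℤ, IsCircuitVec v α ∧ ∀ i, α i ≠ 0 → x i ≠ 0 by
    refine H q (fun i => (x i : ℚ)) ?_ ?_ ?_ ?_
    · funext l
      have h := congrFun hx l
      simp only [Finset.sum_apply, Pi.smul_apply, smul_eq_mul, Pi.zero_apply] at h ⊢
      exact_mod_cast h
    · intro h
      apply hx0
      funext i
      have := congrFun h i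
      simpa using this
    · intro i hi
      simpa using hi
    · exact (Finset.card_filter_le _ _).trans (by simp)
  intro k
  induction k with
  | zero =>
    intro β hker hβ0 _ hcard
    exfalso
    obtain ⟨j, hj⟩ : ∃ j, β j ≠ 0 := by
      by_contra h
      push_neg at h
      exact hβ0 (funext h)
    have : j ∈ Finset.univ.filter (fun i => β i ≠ 0) := by simp [hj]
    have := Finset.card_pos.mpr ⟨j, this⟩
    omega
  | succ k ih =>
    intro β hker hβ0 hβx hcard
    by_cases h : ∃ γ : Fin q → ℚ, (∑ i, γ i • (fun l => (v i l : ℚ))) = 0 ∧ γ ≠ 0 ∧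
        Function.support γ ⊆ Function.support β ∧
        Function.support γ ≠ Function.support β
    · obtain ⟨γ, hγker, hγ0, hγsub, hγne⟩ := h
      refine ih γ hγker hγ0 (fun i hi => hβx i (hγsub hi)) ?_
      have hsub : Finset.univ.filter (fun i => γ i ≠ 0) ⊂
          Finset.univ.filter (fun i => β i ≠ 0) := by
        constructor
        · intro i hi
          simp only [Finset.mem_filter, Finset.mem_univ, true_and] at hi ⊢
          exact hγsub hi
        · intro hc
          apply hγne
          ext i
          constructor
          · exact fun hi => hγsub hi
          · intro hi
            have : i ∈ Finset.univ.filter (fun j => β j ≠ 0) := by simpa using hi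
            simpa using hc this
      have := Finset.card_lt_card hsub
      omega
    · -- β has minimal support; scale it to a primitive integer circuit
      push_neg at h
      obtain ⟨j, hj⟩ : ∃ j, β j ≠ 0 := by
        by_contra hc; push_neg at hc; exact hβ0 (funext hc)
      set N : ℕ := ∏ i, (β i).den with hN
      have hNpos : 0 < N := Finset.prod_pos fun i _ => (β i).pos
      have hNne : (N : ℚ) ≠ 0 := by exact_mod_cast hNpos.ne'
      set y : Fin q → ℤ := fun i => (β i).num * ((N / (β i).den : ℕ) : ℤ) with hy
      have hyval : ∀ i, (y i : ℚ) = β i * N := by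
        intro i
        have hdvd : (β i).den ∣ N := Finset.dvd_prod_of_mem _ (Finset.mem_univ i)
        have h1 : ((β i).den : ℚ) * ((N / (β i).den : ℕ) : ℚ) = (N : ℚ) := by
          rw [← Nat.cast_mul, Nat.mul_div_cancel' hdvd]
        have h2 : ((β i).num : ℚ) = β i * (β i).den := by
          rw [← Rat.mul_den_eq_num]
        calc (y i : ℚ) = ((β i).num : ℚ) * ((N / (β i).den : ℕ) : ℚ) := by
                rw [hy]; rw [Int.cast_mul, Int.cast_natCast]
          _ = β i * (((β i).den : ℚ) * ((N / (β i).den : ℕ) : ℚ)) := by rw [h2]; ring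
          _ = β i * N := by rw [h1]
      have hysupp : ∀ i, y i = 0 ↔ β i = 0 := by
        intro i
        constructor
        · intro hi
          have : (y i : ℚ) = 0 := by exact_mod_cast hi
          rw [hyval i] at this
          exact (mul_eq_zero.mp this).resolve_right hNne
        · intro hi
          have : (y i : ℚ) = 0 := by rw [hyval i, hi, zero_mul]
          exact_mod_cast this
      have hyZker : ∀ l, ∑ i, y i * v i l = 0 := by
        intro l
        have h1 : ∑ i, (y i : ℚ) * (v i l : ℚ) = 0 := by
          have h := congrFun hker l
          simp only [Finset.sum_apply, Pi.smul_apply, smul_eq_mul, Pi.zero_apply] at h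
          calc ∑ i, (y i : ℚ) * (v i l : ℚ)
              = (N : ℚ) * ∑ i, β i * (v i l : ℚ) := by
                rw [Finset.mul_sum]
                exact Finset.sum_congr rfl fun i _ => by rw [hyval i]; ring
            _ = 0 := by rw [h, mul_zero]
        exact_mod_cast h1
      set g : ℤ := Finset.univ.gcd y with hg
      have hg0 : g ≠ 0 := by
        intro hc
        have := Finset.gcd_eq_zero_iff.mp hc j (Finset.mem_univ j)
        exact hj ((hysupp j).mp this)
      set α : Fin q → ℤ := fun i => y i / g with hα
      have hgy : ∀ i, g * α i = y i := fun i =>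
        Int.mul_ediv_cancel' (Finset.gcd_dvd (Finset.mem_univ i))
      have hαsupp : ∀ i, α i = 0 ↔ β i = 0 := by
        intro i
        rw [← hysupp i, ← hgy i]
        constructor
        · intro hc; rw [hc, mul_zero]
        · intro hc; exact (mul_eq_zero.mp hc).resolve_left hg0
      refine ⟨α, ⟨?_, ?_, ?_, ?_⟩, ?_⟩
      · intro hc
        exact hj ((hαsupp j).mp (congrFun hc j))
      · funext l
        simp only [Finset.sum_apply, Pi.smul_apply, smul_eq_mul, Pi.zero_apply]
        have : g * ∑ i, α i * v i l = 0 := by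
          rw [Finset.mul_sum, ← hyZker l]
          exact Finset.sum_congr rfl fun i _ => by rw [← hgy i]; ring
        exact (mul_eq_zero.mp this).resolve_left hg0
      · intro β' hker' hne' hsub'
        have hαβ : Function.support α = Function.support β := by
          ext i
          simp only [Function.mem_support]
          exact not_congr (hαsupp i)
        rw [hαβ] at hsub' ⊢
        exact h β' hker' hne' hsub'
      · -- gcd α = 1
        have h1 : Finset.univ.gcd y = Finset.univ.gcd (fun i => g * α i) := by
          refine Finset.gcd_congr rfl fun i _ => (hgy i).symm
        have h2 : Finset.univ.gcd (fun i => g * α i)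
            = normalize g * Finset.univ.gcd α := Finset.gcd_mul_left
        have h3 : normalize g = g := by
          have := Finset.normalize_gcd (s := (Finset.univ : Finset (Fin q))) (f := y)
          rw [← hg] at this
          exact this
        have h4 : g * 1 = g * Finset.univ.gcd α := by
          rw [mul_one]
          conv_lhs => rw [hg, h1, h2, h3]
        exact (mul_left_cancel₀ hg0 h4).symm
      · intro i hi
        exact hβx i (fun hc => hi ((hαsupp i).mpr hc))


/-- The circuits of a configuration generate `V ∩ ℤ^q` as a group: every integer vector
in the kernel of the matrix with columns `v_1,…,v_q` is an integer linear combination of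
circuits. -/
theorem circuits_span_kernel {n q : ℕ} (hn : 0 < n) (hq : 0 < q)
    (v : Fin q → Fin n → ℤ) (x : Fin q → ℤ) (hx : (∑ i, x i • v i) = 0) :
    x ∈ Submodule.span ℤ { α : Fin q → ℤ | IsCircuitVec v α } := by
  classical
  suffices H : ∀ k : ℕ, ∀ y : Fin q → ℤ, (∑ i, y i • v i) = 0 →
      (Finset.univ.filter (fun i => y i ≠ 0)).card ≤ k →
      y ∈ Submodule.span ℤ { α : Fin q → ℤ | IsCircuitVec v α } by
    exact H q x hx ((Finset.card_filter_le _ _).trans (by simp))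
  intro k
  induction k with
  | zero =>
    intro y hy hcard
    have : y = 0 := by
      funext i
      simp only [Pi.zero_apply]
      by_contra hne
      have : i ∈ Finset.univ.filter (fun j => y j ≠ 0) := by simp [hne]
      have := Finset.card_pos.mpr ⟨i, this⟩
      omega
    rw [this]
    exact Submodule.zero_mem _
  | succ k ih =>
    intro y hy hcard
    by_cases hy0 : y = 0
    · rw [hy0]; exact Submodule.zero_mem _
    obtain ⟨α, hα, hsupp⟩ := exists_circuit v y hy hy0
    obtain ⟨hα0, hαker, hmin, hgcd⟩ := id hα
    obtain ⟨u, hu⟩ := bezout_finset Finset.univ α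
    rw [hgcd] at hu
    have hαmem : α ∈ Submodule.span ℤ { α : Fin q → ℤ | IsCircuitVec v α } :=
      Submodule.subset_span hα
    have hyl : ∀ l, ∑ j, y j * v j l = 0 := fun l => by
      have := congrFun hy l; simpa using this
    have hαl : ∀ l, ∑ j, α j * v j l = 0 := fun l => by
      have := congrFun hαker l; simpa using this
    have hw : ∀ i, (fun j => α i * y j - y i * α j) ∈
        Submodule.span ℤ { α : Fin q → ℤ | IsCircuitVec v α } := by
      intro i
      by_cases hai : α i = 0
      · have : (fun j => α i * y j - y i * α j) = (-(y i)) • α := by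
          funext j
          simp only [Pi.smul_apply, smul_eq_mul, hai, zero_mul, zero_sub, neg_mul]
        rw [this]
        exact Submodule.smul_mem _ _ hαmem
      · -- strictly smaller support: apply the induction hypothesis
        have hyi : y i ≠ 0 := hsupp i hai
        refine ih _ ?_ ?_
        · funext l
          simp only [Finset.sum_apply, Pi.smul_apply, smul_eq_mul, Pi.zero_apply]
          have : ∑ j, (α i * y j - y i * α j) * v j l
              = α i * (∑ j, y j * v j l) - y i * (∑ j, α j * v j l) := by
            rw [Finset.mul_sum, Finset.mul_sum, ← Finset.sum_sub_distrib]
            exact Finset.sum_congr rfl fun j _ => by ring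
          rw [this, hyl l, hαl l]; ring
        · have hsub : Finset.univ.filter (fun j => α i * y j - y i * α j ≠ 0) ⊆
              (Finset.univ.filter (fun j => y j ≠ 0)).erase i := by
            intro j hj
            simp only [Finset.mem_filter, Finset.mem_univ, true_and] at hj
            rw [Finset.mem_erase]
            constructor
            · intro hji
              subst hji
              exact hj (by ring)
            · simp only [Finset.mem_filter, Finset.mem_univ, true_and]
              intro hyj
              apply hj
              have hαj : α j = 0 := by
                by_contra hc
                exact hsupp j hc hyj
              rw [hyj, hαj]; ring
          have h1 := Finset.card_le_card hsub
          have hi : i ∈ Finset.univ.filter (fun j => y j ≠ 0) := by simp [hyi]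
          have h2 := Finset.card_erase_of_mem hi
          omega
    have hdecomp : y = (∑ i, u i • (fun j => α i * y j - y i * α j))
        + (∑ i, u i * y i) • α := by
      funext j
      simp only [Finset.sum_apply, Pi.add_apply, Pi.smul_apply, smul_eq_mul]
      have : ∑ i, u i * (α i * y j - y i * α j)
          = (∑ i, u i * α i) * y j - (∑ i, u i * y i) * α j := by
        rw [Finset.sum_mul, Finset.sum_mul, ← Finset.sum_sub_distrib]
        exact Finset.sum_congr rfl fun i _ => by ring
      rw [this, hu]; ring
    rw [hdecomp]
    exact Submodule.add_mem _
      (Submodule.sum_mem _ fun i _ => Submodule.smul_mem _ _ (hw i))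
      (Submodule.smul_mem _ _ hαmem)
end
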